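/- arXiv:2202.00461 — 2 statements merged into one kernel-verified Lean document; each statement's English description precedes it below -/
import Mathlib

section
/- Let n = n_1 n_2 be a squarefree odd integer not divisible by 7 or 13, with n_1 a product of primes ≡ 1 (mod 3) and n_2 a product of primes ≡ 2 (mod 3). Let p be a prime divisor of n_2, n' = n/p, let S'_1 : x_1,…,x_ℓ be a T_{n'}-extremal sequence in Z/n'Z, and let x* ∈ Z/nZ be not divisible by p. Then the sequence S : x*, p x_1, …, p x_ℓ is a T_n-extremal sequence in Z/nZ. -/
open Finset

open scoped Classical

/-- `Tset n` is the set of cubes of units in `ZMod n`. -/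
def Tset (n : ℕ) : Set (ZMod n) := {x | ∃ u : (ZMod n)ˣ, ((u : ZMod n)) ^ 3 = x}

/-- A family `x : ι → ZMod n` has a nonempty `A`-weighted zero-sum subsequence. -/
def HasWZS {n : ℕ} {ι : Type} (A : Set (ZMod n)) (x : ι → ZMod n) : Prop :=
  ∃ I : Finset ι, I.Nonempty ∧ ∃ a : ι → ZMod n, (∀ i ∈ I, a i ∈ A) ∧ ∑ i ∈ I, a i * x i = 0

/-- The weighted Davenport constant `D_A(ZMod n)`. -/
noncomputable def DavA (n : ℕ) (A : Set (ZMod n)) : ℕ :=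
  sInf {ℓ : ℕ | 0 < ℓ ∧ ∀ x : Fin ℓ → ZMod n, HasWZS A x}

/-- A family has an `A`-weighted zero-sum subsequence of length exactly `m`. -/
def HasWZSLen {n : ℕ} {ι : Type} (A : Set (ZMod n)) (x : ι → ZMod n) (m : ℕ) : Prop :=
  ∃ I : Finset ι, I.card = m ∧ ∃ a : ι → ZMod n, (∀ i ∈ I, a i ∈ A) ∧ ∑ i ∈ I, a i * x i = 0

/-- The constant `E_A(ZMod n)`. -/
noncomputable def EA (n : ℕ) (A : Set (ZMod n)) : ℕ :=
  sInf {ℓ : ℕ | 0 < ℓ ∧ ∀ x : Fin ℓ → ZMod n, HasWZSLen A x n}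

/-- An `A`-extremal sequence: length `D_A - 1` with no nonempty `A`-weighted zero-sum
subsequence. -/
def IsExtremal {n : ℕ} {ι : Type} [Fintype ι] (A : Set (ZMod n)) (x : ι → ZMod n) : Prop :=
  Fintype.card ι + 1 = DavA n A ∧ ¬ HasWZS A x

/-- `Omega n` is the number of prime factors of `n` counted with multiplicity. -/
def Omega (n : ℕ) : ℕ := n.primeFactorsList.length
section AuxStmt13

open Finset

-- ## Tset basics

lemma one_mem_Tset (m : ℕ) : (1 : ZMod m) ∈ Tset m := ⟨1, by norm_num⟩

lemma isUnit_of_mem_Tset {m : ℕ} {a : ZMod m} (h : a ∈ Tset m) : IsUnit a := by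
  obtain ⟨u, hu⟩ := h
  exact hu ▸ (u.isUnit.pow 3)

lemma neg_mem_Tset {m : ℕ} {a : ZMod m} (h : a ∈ Tset m) : -a ∈ Tset m := by
  obtain ⟨u, hu⟩ := h
  exact ⟨-u, by rw [← hu]; rw [Units.val_neg]; ring⟩

lemma castHom_mem_Tset {m k : ℕ} (hk : k ∣ m) {a : ZMod m} (ha : a ∈ Tset m) :
    ZMod.castHom hk (ZMod k) a ∈ Tset k := by
  obtain ⟨u, hu⟩ := ha
  refine ⟨Units.map (ZMod.castHom hk (ZMod k)).toMonoidHom u, ?_⟩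
  rw [← hu]
  simp [Units.coe_map, map_pow]

-- ## Transport of HasWZS along injections

lemma HasWZS.of_comp {n : ℕ} {ι κ : Type} {A : Set (ZMod n)} {y : ι → ZMod n} {f : κ → ι}
    (hf : Function.Injective f) (h : HasWZS A (y ∘ f)) : HasWZS A y := by
  obtain ⟨I, hne, a, ha, hsum⟩ := h
  refine ⟨I.image f, hne.image f, Function.extend f a 1, ?_, ?_⟩
  · intro i hi
    obtain ⟨k, hk, rfl⟩ := Finset.mem_image.mp hi
    rw [hf.extend_apply]
    exact ha k hk
  · rw [Finset.sum_image (fun a _ b _ hab => hf hab)]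
    calc ∑ k ∈ I, Function.extend f a 1 (f k) * y (f k)
        = ∑ k ∈ I, a k * (y ∘ f) k := by
          refine Finset.sum_congr rfl fun k _ => ?_
          rw [hf.extend_apply]
          rfl
      _ = 0 := hsum

-- ## Local solvability

/-- Fixed-support solvability with cube-of-unit weights. -/
def LSolv (m : ℕ) {ι : Type} (I : Finset ι) (u : ι → ZMod m) : Prop :=
  ∃ a : ι → ZMod m, (∀ i ∈ I, a i ∈ Tset m) ∧ ∑ i ∈ I, a i * u i = 0

lemma lsolv_of_eq_zero {m : ℕ} {ι : Type} {I : Finset ι} {u : ι → ZMod m}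
    (h : ∀ i ∈ I, u i = 0) : LSolv m I u :=
  ⟨fun _ => 1, fun i _ => one_mem_Tset m, by
    rw [Finset.sum_eq_zero]
    intro i hi
    rw [h i hi, mul_zero]⟩

-- ## Cube surjectivity for primes `q ≡ 2 (mod 3)`

lemma cube_surj_two {q : ℕ} (hq : q.Prime) (h2 : q % 3 = 2) (w : (ZMod q)ˣ) :
    ∃ x : (ZMod q)ˣ, x ^ 3 = w := by
  haveI : Fact q.Prime := ⟨hq⟩
  have hcard : Nat.card (ZMod q)ˣ = q - 1 := by
    simp [Nat.card_eq_fintype_card, ZMod.card_units_eq_totient, Nat.totient_prime hq]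
  have hcop : (Nat.card (ZMod q)ˣ).Coprime 3 := by
    rw [hcard]
    have h3 : ¬ (3 ∣ (q - 1)) := by
      intro hdvd
      have hq2 := hq.two_le
      omega
    exact ((Nat.prime_three).coprime_iff_not_dvd.mpr h3).symm
  exact ⟨(powCoprime hcop).symm w, (powCoprime hcop).apply_symm_apply w⟩

end AuxStmt13
section CovOneDev

open Finset

variable {q : ℕ}

lemma exists_cubic_char (hq : q.Prime) (h1 : q % 3 = 1) :
    ∃ χ : MulChar (ZMod q) ℂ, orderOf χ = 3 := by
  haveI : Fact q.Prime := ⟨hq⟩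
  haveI : NeZero ((Monoid.exponent (ZMod q)ˣ : ℕ) : ℂ) := by
    refine ⟨?_⟩
    have h0 : (Monoid.exponent (ZMod q)ˣ : ℕ) ≠ 0 := Monoid.exponent_ne_zero_of_finite
    exact_mod_cast h0
  obtain ⟨e⟩ := MulChar.mulEquiv_units (ZMod q) ℂ
  have hcard : Fintype.card (ZMod q)ˣ = q - 1 := by
    rw [ZMod.card_units_eq_totient, Nat.totient_prime hq]
  have h3 : (3 : ℕ) ∣ Fintype.card (ZMod q)ˣ := by
    rw [hcard]
    have := hq.two_le
    omega
  haveI : Fact (Nat.Prime 3) := ⟨by norm_num⟩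
  obtain ⟨u, hu⟩ := exists_prime_orderOf_dvd_card 3 h3
  refine ⟨e.symm u, ?_⟩
  rw [← hu]
  exact orderOf_injective e.symm.toMonoidHom e.symm.injective u

/-- `|J(ψ,ψ)| = √q` for a cubic character `ψ`. -/
lemma abs_jacobiSum_cubic [NeZero q] (hq : q.Prime) {ψ : MulChar (ZMod q) ℂ}
    (h3 : ψ ^ 3 = 1) (h1 : ψ ≠ 1) (h2 : ψ * ψ ≠ 1) :
    ‖jacobiSum ψ ψ‖ = Real.sqrt q := by
  haveI : Fact q.Prime := ⟨hq⟩
  -- values are roots of unity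
  have hval : ∀ z : ZMod q, IsUnit z → (ψ z) ^ 3 = 1 := by
    intro z hz
    lift z to (ZMod q)ˣ using hz with zu
    calc (ψ ↑zu) ^ 3 = (ψ ^ 3) ↑zu := (MulChar.pow_apply_coe ψ 3 zu).symm
      _ = 1 := by rw [h3]; exact MulChar.one_apply_coe zu
  have habs1 : ∀ z : ZMod q, IsUnit z → ‖ψ z‖ = 1 := by
    intro z hz
    have h := congrArg (‖·‖) (hval z hz)
    rw [norm_pow, norm_one] at h
    nlinarith [norm_nonneg (ψ z), sq_nonneg (‖ψ z‖ - 1),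
      sq_nonneg (‖ψ z‖ + 1)]
  -- conj ∘ ψ = ψ⁻¹
  have hconj : ∀ z : ZMod q, (starRingEnd ℂ) (ψ z) = ψ⁻¹ z := by
    intro z
    by_cases hz : IsUnit z
    · have hne : ψ z ≠ 0 := by
        intro h0
        have := habs1 z hz
        rw [h0, norm_zero] at this
        norm_num at this
      have hmul : ψ z * (starRingEnd ℂ) (ψ z) = 1 := by
        rw [Complex.mul_conj]
        norm_cast
        rw [← Complex.sq_norm, habs1 z hz]
        norm_num
      have h1' : (starRingEnd ℂ) (ψ z) = (ψ z)⁻¹ :=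
        eq_inv_of_mul_eq_one_left (by rw [mul_comm] at hmul; exact hmul)
      rw [h1', MulChar.inv_apply_eq_inv]
      rw [Ring.inverse_eq_inv']
    · rw [MulChar.map_nonunit ψ hz, MulChar.map_nonunit ψ⁻¹ hz, map_zero]
  have hconjJ : (starRingEnd ℂ) (jacobiSum ψ ψ) = jacobiSum ψ⁻¹ ψ⁻¹ := by
    rw [jacobiSum, jacobiSum, map_sum]
    refine Finset.sum_congr rfl fun z _ => ?_
    rw [map_mul, hconj, hconj]
  have hchar : ringChar ℂ ≠ ringChar (ZMod q) := by
    rw [ringChar.eq_zero, ZMod.ringChar_zmod_n]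
    exact fun h => hq.ne_zero h.symm
  have hprod := jacobiSum_mul_jacobiSum_inv hchar h1 h1 h2
  rw [← hconjJ] at hprod
  have hnormSq : (Complex.normSq (jacobiSum ψ ψ) : ℂ) = (q : ℂ) := by
    rw [← Complex.mul_conj]
    rw [hprod]
    simp [ZMod.card]
  have hnq : Complex.normSq (jacobiSum ψ ψ) = (q : ℝ) := by
    exact_mod_cast hnormSq
  rw [Complex.norm_def, hnq]

/-- Values of a character with `ψ³ = 1` have absolute value 1 on units. -/
lemma abs_val_eq_one {q : ℕ} [NeZero q] {ψ : MulChar (ZMod q) ℂ} (h3 : ψ ^ 3 = 1)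
    {z : ZMod q} (hz : IsUnit z) : ‖ψ z‖ = 1 := by
  have hval : (ψ z) ^ 3 = 1 := by
    lift z to (ZMod q)ˣ using hz with zu
    calc (ψ ↑zu) ^ 3 = (ψ ^ 3) ↑zu := (MulChar.pow_apply_coe ψ 3 zu).symm
      _ = 1 := by rw [h3]; exact MulChar.one_apply_coe zu
  have h := congrArg (‖·‖) hval
  rw [norm_pow, norm_one] at h
  nlinarith [norm_nonneg (ψ z), sq_nonneg (‖ψ z‖ - 1),
    sq_nonneg (‖ψ z‖ + 1)]

end CovOneDev
section CovOneDevB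

open Finset

/-- The number of units whose cube is `s`, as a character sum. -/
lemma cube_filter_card {q : ℕ} [NeZero q] (hq : q.Prime) (h1 : q % 3 = 1)
    {χ : MulChar (ZMod q) ℂ} (horder : orderOf χ = 3) (s : ZMod q) :
    ((Finset.univ.filter (fun x : (ZMod q)ˣ => ((x : ZMod q)) ^ 3 = s)).card : ℂ)
      = ∑ i ∈ Finset.range 3, (χ ^ i) s := by
  classical
  haveI : Fact q.Prime := ⟨hq⟩
  haveI : Fact (Nat.Prime 3) := ⟨by norm_num⟩
  have hχ3 : χ ^ 3 = 1 := by rw [← horder]; exact pow_orderOf_eq_one χ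
  have hχ1 : χ ≠ 1 := fun h => by rw [h, orderOf_one] at horder; omega
  obtain ⟨g, hg⟩ := IsCyclic.exists_generator (α := (ZMod q)ˣ)
  have horderg : orderOf g = q - 1 := by
    rw [orderOf_eq_card_of_forall_mem_zpowers hg, Nat.card_eq_fintype_card,
      ZMod.card_units_eq_totient, Nat.totient_prime hq]
  have hgpow : ∀ w : (ZMod q)ˣ, ∃ k : ℕ, g ^ k = w := by
    intro w
    have := hg w
    rwa [← mem_powers_iff_mem_zpowers, Submonoid.mem_powers_iff] at this
  have hq2 := hq.two_le
  have h3m : q - 1 = 3 * ((q - 1) / 3) := by omega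
  set m := (q - 1) / 3 with hm
  have hm0 : 0 < m := by omega
  -- χ g has order 3
  have hcube_one : ∀ x : (ZMod q)ˣ, (χ ↑x) ^ 3 = 1 := by
    intro x
    calc (χ ↑x) ^ 3 = (χ ^ 3) ↑x := (MulChar.pow_apply_coe χ 3 x).symm
      _ = 1 := by rw [hχ3]; exact MulChar.one_apply_coe x
  have hωord : orderOf (χ (g : ZMod q)) = 3 := by
    refine orderOf_eq_prime (hcube_one g) ?_
    intro hω
    apply hχ1
    apply MulChar.ext
    intro w
    obtain ⟨k, rfl⟩ := hgpow w
    rw [MulChar.one_apply_coe, Units.val_pow_eq_pow_val, map_pow, hω, one_pow]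
  by_cases hs : s = 0
  · subst hs
    rw [Finset.filter_false_of_mem (fun x _ => pow_ne_zero 3 (Units.ne_zero x)),
      Finset.card_empty]
    symm
    rw [Nat.cast_zero]
    refine Finset.sum_eq_zero fun i _ => ?_
    exact MulChar.map_nonunit _ (by simpa using not_isUnit_zero)
  · lift s to (ZMod q)ˣ using isUnit_iff_ne_zero.mpr hs with su
    have hfeq : (Finset.univ.filter (fun x : (ZMod q)ˣ => ((x : ZMod q)) ^ 3 = (su : ZMod q)))
        = (Finset.univ.filter (fun x : (ZMod q)ˣ => x ^ 3 = su)) := by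
      refine Finset.filter_congr fun x _ => ?_
      rw [← Units.val_pow_eq_pow_val]
      exact ⟨fun h => Units.ext h, fun h => congrArg Units.val h⟩
    simp only [hfeq]
    have hrhs : ∑ i ∈ Finset.range 3, (χ ^ i) ↑su = 1 + χ ↑su + (χ ↑su) ^ 2 := by
      rw [Finset.sum_range_succ, Finset.sum_range_succ, Finset.sum_range_one]
      rw [pow_zero, MulChar.one_apply_coe, pow_one, MulChar.pow_apply_coe]
    rw [hrhs]
    by_cases hω : χ ↑su = 1
    · -- `su` is a cube and has exactly 3 cube roots
      rw [hω]
      obtain ⟨k, rfl⟩ := hgpow su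
      have hωk : (χ (g : ZMod q)) ^ k = 1 := by
        rw [← map_pow, ← Units.val_pow_eq_pow_val]
        exact hω
      have h3k : 3 ∣ k := by
        have := orderOf_dvd_of_pow_eq_one hωk
        rwa [hωord] at this
      set x₀ : (ZMod q)ˣ := g ^ (k / 3) with hx₀def
      have hx₀ : x₀ ^ 3 = g ^ k := by
        rw [hx₀def, ← pow_mul, Nat.div_mul_cancel h3k]
      set ζ : (ZMod q)ˣ := g ^ m with hζdef
      have hζ3 : ζ ^ 3 = 1 := by
        rw [hζdef, ← pow_mul, show m * 3 = q - 1 by omega, ← horderg]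
        exact pow_orderOf_eq_one g
      have hζne1 : ζ ≠ 1 := by
        intro h
        have hdvd := orderOf_dvd_of_pow_eq_one (show g ^ m = 1 from h)
        rw [horderg] at hdvd
        have := Nat.le_of_dvd hm0 hdvd
        omega
      have hζord : orderOf ζ = 3 := orderOf_eq_prime hζ3 hζne1
      have hζ2ne1 : ζ ^ 2 ≠ 1 := by
        intro h
        have := orderOf_dvd_of_pow_eq_one h
        rw [hζord] at this
        have := Nat.le_of_dvd (by norm_num) this
        omega
      have hζ2neζ : ζ ^ 2 ≠ ζ := by
        intro h
        apply hζne1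
        have : ζ * ζ = ζ * 1 := by
          rw [mul_one, ← pow_two, h]
        exact mul_left_cancel this
      have hroots : ∀ y : (ZMod q)ˣ, y ^ 3 = 1 ↔ y ∈ ({1, ζ, ζ ^ 2} : Finset (ZMod q)ˣ) := by
        intro y
        constructor
        · intro hy
          obtain ⟨j, rfl⟩ := hgpow y
          have hdvd : (q - 1) ∣ 3 * j := by
            rw [← horderg]
            apply orderOf_dvd_of_pow_eq_one
            rw [mul_comm, pow_mul]
            exact hy
          have hmj : m ∣ j := by
            rw [h3m] at hdvd
            exact (mul_dvd_mul_iff_left (by norm_num : (3 : ℕ) ≠ 0)).mp hdvd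
          obtain ⟨d, rfl⟩ := hmj
          have hyζ : g ^ (m * d) = ζ ^ d := by rw [hζdef, ← pow_mul]
          rw [hyζ]
          have hsplit : ζ ^ d = ζ ^ (d % 3) := by
            conv_lhs => rw [← Nat.div_add_mod d 3]
            rw [pow_add, pow_mul, hζ3, one_pow, one_mul]
          rw [hsplit]
          have : d % 3 = 0 ∨ d % 3 = 1 ∨ d % 3 = 2 := by omega
          rcases this with h | h | h <;> rw [h] <;> simp [Finset.mem_insert]
        · intro hy
          rcases Finset.mem_insert.mp hy with rfl | hy
          · exact one_pow 3
          rcases Finset.mem_insert.mp hy with rfl | hy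
          · exact hζ3
          · rw [Finset.mem_singleton.mp hy, ← pow_mul, show 2 * 3 = 3 * 2 from rfl, pow_mul,
              hζ3, one_pow]
      have hfilter : (Finset.univ.filter (fun x : (ZMod q)ˣ => x ^ 3 = g ^ k))
          = {x₀, x₀ * ζ, x₀ * ζ ^ 2} := by
        ext x
        simp only [Finset.mem_filter, Finset.mem_univ, true_and, Finset.mem_insert,
          Finset.mem_singleton]
        constructor
        · intro hx
          have hy : (x₀⁻¹ * x) ^ 3 = 1 := by
            rw [mul_pow, inv_pow, hx, hx₀]
            exact inv_mul_cancel _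
          have := (hroots _).mp hy
          simp only [Finset.mem_insert, Finset.mem_singleton] at this
          rcases this with h | h | h
          · left; exact (inv_mul_eq_one.mp h).symm
          · right; left; exact (inv_mul_eq_iff_eq_mul.mp h)
          · right; right; exact (inv_mul_eq_iff_eq_mul.mp h)
        · rintro (rfl | rfl | rfl)
          · exact hx₀
          · rw [mul_pow, hx₀, hζ3, mul_one]
          · rw [mul_pow, hx₀, ← pow_mul, show 2 * 3 = 3 * 2 from rfl, pow_mul, hζ3, one_pow,
              mul_one]
      rw [hfilter]
      have hcard3 : ({x₀, x₀ * ζ, x₀ * ζ ^ 2} : Finset (ZMod q)ˣ).card = 3 := by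
        rw [Finset.card_insert_of_notMem, Finset.card_insert_of_notMem,
          Finset.card_singleton]
        · simp only [Finset.mem_singleton]
          intro h
          exact hζ2neζ (mul_left_cancel h).symm
        · simp only [Finset.mem_insert, Finset.mem_singleton]
          push_neg
          refine ⟨?_, ?_⟩
          · intro h
            apply hζne1
            have : x₀ * 1 = x₀ * ζ := by rw [mul_one]; exact h
            exact (mul_left_cancel this).symm
          · intro h
            apply hζ2ne1
            have : x₀ * 1 = x₀ * ζ ^ 2 := by rw [mul_one]; exact h
            exact (mul_left_cancel this).symm
      rw [hcard3]
      norm_num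
    · -- `su` is not a cube : no cube roots, and the character sum vanishes
      have hempty : (Finset.univ.filter (fun x : (ZMod q)ˣ => x ^ 3 = su)) = ∅ := by
        rw [Finset.filter_eq_empty_iff]
        intro x _
        intro hx
        apply hω
        rw [← hx, Units.val_pow_eq_pow_val, map_pow]
        exact hcube_one x
      rw [hempty, Finset.card_empty]
      have hfac : (χ ↑su - 1) * (1 + χ ↑su + (χ ↑su) ^ 2) = 0 := by
        linear_combination hcube_one su
      rcases mul_eq_zero.mp hfac with h' | h'
      · exact absurd (by linear_combination h' : χ ↑su = (1 : ℂ)) hω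
      · rw [Nat.cast_zero]
        exact h'.symm

end CovOneDevB
section CovOneDevC

open Finset

lemma cov_one {q : ℕ} (hq : q.Prime) (h1 : q % 3 = 1) (h19 : 19 ≤ q)
    {c t : ZMod q} (hc : c ≠ 0) (ht : t ≠ 0) :
    ∃ a b : ZMod q, a ∈ Tset q ∧ b ∈ Tset q ∧ a + c * b = t := by
  classical
  haveI : Fact q.Prime := ⟨hq⟩
  haveI : NeZero q := ⟨hq.ne_zero⟩
  obtain ⟨χ, horder⟩ := exists_cubic_char hq h1
  have hχ3 : χ ^ 3 = 1 := by rw [← horder]; exact pow_orderOf_eq_one χ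
  have hχ1 : χ ≠ 1 := fun h => by rw [h, orderOf_one] at horder; omega
  have hχ2 : χ ^ 2 ≠ 1 := by
    intro h
    have hdvd := orderOf_dvd_of_pow_eq_one h
    rw [horder] at hdvd
    have := Nat.le_of_dvd (by norm_num) hdvd
    omega
  have hpow3 : ∀ i : ℕ, (χ ^ i) ^ 3 = 1 := by
    intro i
    rw [← pow_mul, mul_comm, pow_mul, hχ3, one_pow]
  have hone : ∀ z : ZMod q, z ≠ 0 → (1 : MulChar (ZMod q) ℂ) z = 1 := by
    intro z hz
    lift z to (ZMod q)ˣ using isUnit_iff_ne_zero.mpr hz with zu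
    exact MulChar.one_apply_coe zu
  have habsv : ∀ (i : ℕ) (z : ZMod q), z ≠ 0 → ‖(χ ^ i) z‖ = 1 := by
    intro i z hz
    exact abs_val_eq_one (hpow3 i) (isUnit_iff_ne_zero.mpr hz)
  have hcinv : c⁻¹ ≠ 0 := inv_ne_zero hc
  set P : Finset ((ZMod q)ˣ × (ZMod q)ˣ) :=
    Finset.univ.filter (fun xy => ((xy.1 : ZMod q)) ^ 3 + c * ((xy.2 : ZMod q)) ^ 3 = t) with hP
  suffices hPne : P.Nonempty by
    obtain ⟨⟨xu, yu⟩, hxy⟩ := hPne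
    exact ⟨((xu : ZMod q)) ^ 3, ((yu : ZMod q)) ^ 3, ⟨xu, rfl⟩, ⟨yu, rfl⟩,
      (Finset.mem_filter.mp hxy).2⟩
  rw [← Finset.card_pos]
  -- the fibered counting identity
  have hnat : P.card = ∑ s : ZMod q,
      ((Finset.univ.filter (fun x : (ZMod q)ˣ => ((x : ZMod q)) ^ 3 = s)).card
        * (Finset.univ.filter (fun y : (ZMod q)ˣ => ((y : ZMod q)) ^ 3 = c⁻¹ * (t - s))).card) := by
    rw [Finset.card_eq_sum_card_fiberwise
      (f := fun xy : (ZMod q)ˣ × (ZMod q)ˣ => ((xy.1 : ZMod q)) ^ 3) (t := Finset.univ)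
      (fun x _ => Finset.mem_univ _)]
    refine Finset.sum_congr rfl fun s _ => ?_
    rw [← Finset.card_product]
    congr 1
    ext ⟨xu, yu⟩
    simp only [hP, Finset.mem_filter, Finset.mem_univ, true_and, Finset.mem_product]
    constructor
    · rintro ⟨hsum', hfst⟩
      refine ⟨hfst, ?_⟩
      field_simp
      linear_combination hsum' - hfst
    · rintro ⟨hfst, hsnd⟩
      have hcc : c * (c⁻¹ * (t - s)) = t - s := by field_simp
      exact ⟨by linear_combination hfst + c * hsnd + hcc, hfst⟩
  have hfib : (P.card : ℂ) = ∑ s : ZMod q,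
      (∑ i ∈ Finset.range 3, (χ ^ i) s) * (∑ j ∈ Finset.range 3, (χ ^ j) (c⁻¹ * (t - s))) := by
    calc (P.card : ℂ)
        = ∑ s : ZMod q,
            (((Finset.univ.filter (fun x : (ZMod q)ˣ => ((x : ZMod q)) ^ 3 = s)).card : ℂ)
            * ((Finset.univ.filter
                (fun y : (ZMod q)ˣ => ((y : ZMod q)) ^ 3 = c⁻¹ * (t - s))).card : ℂ)) := by
          rw [hnat]
          push_cast
          rfl
      _ = _ := by
          refine Finset.sum_congr rfl fun s _ => ?_
          rw [cube_filter_card hq h1 horder s, cube_filter_card hq h1 horder (c⁻¹ * (t - s))]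
  have hsub : ∀ i j : ℕ, ∑ s : ZMod q, (χ ^ i) s * (χ ^ j) (t - s)
      = (χ ^ i) t * (χ ^ j) t * jacobiSum (χ ^ i) (χ ^ j) := by
    intro i j
    have hbij := Fintype.sum_equiv (Equiv.mulLeft₀ t ht)
      (fun r => (χ ^ i) (t * r) * (χ ^ j) (t - t * r))
      (fun s => (χ ^ i) s * (χ ^ j) (t - s)) (fun r => rfl)
    rw [← hbij, jacobiSum, Finset.mul_sum]
    refine Finset.sum_congr rfl fun r _ => ?_
    show (χ ^ i) (t * r) * (χ ^ j) (t - t * r) = _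
    rw [show t - t * r = t * (1 - r) by ring, map_mul, map_mul]
    ring
  have hexp : (P.card : ℂ) = ∑ i ∈ Finset.range 3, ∑ j ∈ Finset.range 3,
      (χ ^ j) c⁻¹ * ((χ ^ i) t * (χ ^ j) t * jacobiSum (χ ^ i) (χ ^ j)) := by
    rw [hfib]
    calc ∑ s : ZMod q, (∑ i ∈ Finset.range 3, (χ ^ i) s)
          * (∑ j ∈ Finset.range 3, (χ ^ j) (c⁻¹ * (t - s)))
        = ∑ s : ZMod q, ∑ i ∈ Finset.range 3, ∑ j ∈ Finset.range 3,
            (χ ^ i) s * (χ ^ j) (c⁻¹ * (t - s)) := by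
          refine Finset.sum_congr rfl fun s _ => ?_
          rw [Finset.sum_mul_sum]
      _ = ∑ i ∈ Finset.range 3, ∑ s : ZMod q, ∑ j ∈ Finset.range 3,
            (χ ^ i) s * (χ ^ j) (c⁻¹ * (t - s)) := Finset.sum_comm
      _ = ∑ i ∈ Finset.range 3, ∑ j ∈ Finset.range 3, ∑ s : ZMod q,
            (χ ^ i) s * (χ ^ j) (c⁻¹ * (t - s)) := by
          refine Finset.sum_congr rfl fun i _ => ?_
          exact Finset.sum_comm
      _ = _ := by
          refine Finset.sum_congr rfl fun i _ => Finset.sum_congr rfl fun j _ => ?_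
          rw [← hsub i j, Finset.mul_sum]
          refine Finset.sum_congr rfl fun s _ => ?_
          rw [map_mul]
          ring
  -- the main (0,0) term
  have h00 : (χ ^ 0) c⁻¹ * ((χ ^ 0) t * (χ ^ 0) t * jacobiSum (χ ^ 0) (χ ^ 0))
      = (q : ℂ) - 2 := by
    rw [pow_zero, hone _ hcinv, hone _ ht, jacobiSum_one_one]
    rw [ZMod.card]
    ring
  -- χ² = χ⁻¹
  have hinv : χ ^ 2 = χ⁻¹ := by
    refine eq_inv_of_mul_eq_one_left ?_
    rw [← pow_succ]
    exact hχ3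
  have hm1 : (-1 : ZMod q) ≠ 0 := by
    intro h
    rw [neg_eq_zero] at h
    exact one_ne_zero h
  -- bounds on the eight error terms
  have habsJ1 : ∀ i j : ℕ, ‖(χ ^ j) c⁻¹ * ((χ ^ i) t * (χ ^ j) t
      * jacobiSum (χ ^ i) (χ ^ j))‖
      = ‖jacobiSum (χ ^ i) (χ ^ j)‖ := by
    intro i j
    rw [norm_mul, norm_mul, norm_mul, habsv j _ hcinv, habsv i _ ht, habsv j _ ht]
    ring
  have hJ01 : ‖jacobiSum (χ ^ 0) (χ ^ 1)‖ = 1 := by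
    rw [pow_zero, pow_one, jacobiSum_one_nontrivial hχ1]
    simp
  have hJ02 : ‖jacobiSum (χ ^ 0) (χ ^ 2)‖ = 1 := by
    rw [pow_zero, jacobiSum_one_nontrivial hχ2]
    simp
  have hJ10 : ‖jacobiSum (χ ^ 1) (χ ^ 0)‖ = 1 := by
    rw [pow_zero, pow_one, jacobiSum_comm, jacobiSum_one_nontrivial hχ1]
    simp
  have hJ20 : ‖jacobiSum (χ ^ 2) (χ ^ 0)‖ = 1 := by
    rw [pow_zero, jacobiSum_comm, jacobiSum_one_nontrivial hχ2]
    simp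
  have hJ12 : ‖jacobiSum (χ ^ 1) (χ ^ 2)‖ = 1 := by
    rw [pow_one, hinv, jacobiSum_nontrivial_inv hχ1, norm_neg]
    rw [show χ = χ ^ 1 from (pow_one χ).symm]
    exact habsv 1 (-1) hm1
  have hJ21 : ‖jacobiSum (χ ^ 2) (χ ^ 1)‖ = 1 := by
    rw [jacobiSum_comm]
    exact hJ12
  have hJ11 : ‖jacobiSum (χ ^ 1) (χ ^ 1)‖ = Real.sqrt q := by
    rw [pow_one]
    refine abs_jacobiSum_cubic hq hχ3 hχ1 ?_
    rw [← pow_two]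
    exact hχ2
  have hJ22 : ‖jacobiSum (χ ^ 2) (χ ^ 2)‖ = Real.sqrt q := by
    refine abs_jacobiSum_cubic hq (hpow3 2) hχ2 ?_
    intro h
    apply hχ1
    calc χ = χ ^ 3 * χ := by rw [hχ3, one_mul]
      _ = χ ^ 2 * χ ^ 2 := by rw [← pow_succ]; rw [← pow_add]
      _ = 1 := h
  -- assemble the bound
  have hE8 : (P.card : ℂ) - ((q : ℂ) - 2)
      = (χ ^ 1) c⁻¹ * ((χ ^ 0) t * (χ ^ 1) t * jacobiSum (χ ^ 0) (χ ^ 1))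
      + ((χ ^ 2) c⁻¹ * ((χ ^ 0) t * (χ ^ 2) t * jacobiSum (χ ^ 0) (χ ^ 2))
      + ((χ ^ 0) c⁻¹ * ((χ ^ 1) t * (χ ^ 0) t * jacobiSum (χ ^ 1) (χ ^ 0))
      + ((χ ^ 1) c⁻¹ * ((χ ^ 1) t * (χ ^ 1) t * jacobiSum (χ ^ 1) (χ ^ 1))
      + ((χ ^ 2) c⁻¹ * ((χ ^ 1) t * (χ ^ 2) t * jacobiSum (χ ^ 1) (χ ^ 2))
      + ((χ ^ 0) c⁻¹ * ((χ ^ 2) t * (χ ^ 0) t * jacobiSum (χ ^ 2) (χ ^ 0))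
      + ((χ ^ 1) c⁻¹ * ((χ ^ 2) t * (χ ^ 1) t * jacobiSum (χ ^ 2) (χ ^ 1))
      + (χ ^ 2) c⁻¹ * ((χ ^ 2) t * (χ ^ 2) t * jacobiSum (χ ^ 2) (χ ^ 2)))))))) := by
    rw [hexp]
    simp only [Finset.sum_range_succ, Finset.sum_range_zero, zero_add]
    linear_combination h00
  have habs8 : ‖(P.card : ℂ) - ((q : ℂ) - 2)‖ ≤ 6 + 2 * Real.sqrt q := by
    rw [hE8]
    have T := fun (x y : ℂ) => norm_add_le x y
    calc ‖_‖ ≤ _ := T _ _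
      _ ≤ _ := add_le_add_right (T _ _) _
      _ ≤ _ := add_le_add_right (add_le_add_right (T _ _) _) _
      _ ≤ _ := add_le_add_right (add_le_add_right (add_le_add_right (T _ _) _) _) _
      _ ≤ _ := add_le_add_right (add_le_add_right (add_le_add_right (add_le_add_right (T _ _) _) _) _) _
      _ ≤ _ := add_le_add_right (add_le_add_right (add_le_add_right (add_le_add_right
          (add_le_add_right (T _ _) _) _) _) _) _
      _ ≤ _ := add_le_add_right (add_le_add_right (add_le_add_right (add_le_add_right
          (add_le_add_right (add_le_add_right (T _ _) _) _) _) _) _) _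
      _ ≤ 6 + 2 * Real.sqrt q := by
          rw [habsJ1, habsJ1, habsJ1, habsJ1, habsJ1, habsJ1, habsJ1, habsJ1]
          rw [hJ01, hJ02, hJ10, hJ11, hJ12, hJ20, hJ21, hJ22]
          linarith
  -- numeric conclusion
  have hq19 : (19 : ℝ) ≤ (q : ℝ) := by exact_mod_cast h19
  have hsqrt : Real.sqrt q < ((q : ℝ) - 8) / 2 := by
    refine (Real.sqrt_lt' (by linarith)).mpr ?_
    nlinarith
  have hcast : ((P.card : ℂ) - ((q : ℂ) - 2)) = (((P.card : ℝ) - ((q : ℝ) - 2) : ℝ) : ℂ) := by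
    push_cast
    ring
  rw [hcast, Complex.norm_real, Real.norm_eq_abs] at habs8
  have hlow := (abs_le.mp habs8).1
  have hpos : (0 : ℝ) < (P.card : ℝ) := by nlinarith
  exact_mod_cast hpos

end CovOneDevC
section CovStmt13

open Finset

/-- Covering lemma, case `q ≡ 2 (mod 3)`: all units are cubes. -/
lemma cov_two {q : ℕ} (hq : q.Prime) (h2 : q % 3 = 2) (hq2 : q ≠ 2)
    {c t : ZMod q} (hc : c ≠ 0) (ht : t ≠ 0) :
    ∃ a b : ZMod q, a ∈ Tset q ∧ b ∈ Tset q ∧ a + c * b = t := by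
  haveI : Fact q.Prime := ⟨hq⟩
  -- pick a unit z ≠ t
  obtain ⟨z, hz0, hzt⟩ : ∃ z : ZMod q, z ≠ 0 ∧ z ≠ t := by
    rcases eq_or_ne t 1 with rfl | ht1
    · refine ⟨-1, by simp, ?_⟩
      intro hcontra
      have hdvd : (q : ℕ) ∣ 2 := by
        refine (ZMod.natCast_eq_zero_iff 2 q).mp ?_
        push_cast
        linear_combination -hcontra
      have := Nat.le_of_dvd (by norm_num) hdvd
      have := hq.two_le
      omega
    · exact ⟨1, one_ne_zero, fun h => ht1 h.symm⟩
  have hwz : t - z ≠ 0 := sub_ne_zero.mpr (Ne.symm hzt)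
  -- cube roots
  obtain ⟨x, hx⟩ := cube_surj_two hq h2 (Units.mk0 z hz0)
  obtain ⟨y, hy⟩ := cube_surj_two hq h2 (Units.mk0 ((t - z) * c⁻¹) (by
    exact mul_ne_zero hwz (inv_ne_zero hc)))
  refine ⟨z, (t - z) * c⁻¹, ⟨x, ?_⟩, ⟨y, ?_⟩, ?_⟩
  · have := congrArg (fun u : (ZMod q)ˣ => (u : ZMod q)) hx
    simpa using this
  · have := congrArg (fun u : (ZMod q)ˣ => (u : ZMod q)) hy
    simpa using this
  · have hcc : c * ((t - z) * c⁻¹) = t - z := by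
      field_simp
    rw [hcc]
    ring

/-- `q ≥ 19` for primes `≡ 1 mod 3` other than 7, 13. -/
lemma nineteen_le {q : ℕ} (hq : q.Prime) (h1 : q % 3 = 1) (h7 : q ≠ 7) (h13 : q ≠ 13) :
    19 ≤ q := by
  by_contra hlt
  push_neg at hlt
  have h2 := hq.two_le
  interval_cases q <;> first | (exact absurd hq (by decide)) | omega

/-- The combined covering lemma for good primes. -/
lemma cov {q : ℕ} (hq : q.Prime) (hq2 : q ≠ 2) (hq3 : q ≠ 3) (hq7 : q ≠ 7) (hq13 : q ≠ 13)
    {c t : ZMod q} (hc : c ≠ 0) (ht : t ≠ 0) :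
    ∃ a b : ZMod q, a ∈ Tset q ∧ b ∈ Tset q ∧ a + c * b = t := by
  rcases (by omega : q % 3 = 0 ∨ q % 3 = 1 ∨ q % 3 = 2) with h | h | h
  · exfalso
    have : (3 : ℕ) ∣ q := Nat.dvd_of_mod_eq_zero h
    rcases (Nat.Prime.eq_one_or_self_of_dvd hq 3 this) with h3 | h3 <;> omega
  · exact cov_one hq h (nineteen_le hq h hq7 hq13) hc ht
  · exact cov_two hq h hq2 hc ht

end CovStmt13
section PrimeStmt13

open Finset

variable {q : ℕ} {ι : Type}

lemma sum_eq_sum_filter {I : Finset ι} (u : ι → ZMod q) (a : ι → ZMod q) :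
    ∑ i ∈ I, a i * u i = ∑ i ∈ I.filter (fun i => u i ≠ 0), a i * u i := by
  refine (Finset.sum_subset (Finset.filter_subset _ _) ?_).symm
  intro i hi hni
  have : u i = 0 := by
    by_contra hne
    exact hni (Finset.mem_filter.mpr ⟨hi, hne⟩)
  rw [this, mul_zero]

lemma lsolv_card_ne_one (hq : q.Prime) {I : Finset ι} {u : ι → ZMod q}
    (h : LSolv q I u) : (I.filter (fun i => u i ≠ 0)).card ≠ 1 := by
  haveI : Fact q.Prime := ⟨hq⟩
  obtain ⟨a, hmem, hsum⟩ := h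
  intro hcard
  obtain ⟨i, hi⟩ := Finset.card_eq_one.mp hcard
  rw [sum_eq_sum_filter, hi, Finset.sum_singleton] at hsum
  have hiI : i ∈ I ∧ u i ≠ 0 := by
    have : i ∈ I.filter (fun i => u i ≠ 0) := by rw [hi]; exact Finset.mem_singleton_self i
    exact Finset.mem_filter.mp this
  rcases mul_eq_zero.mp hsum with h0 | h0
  · exact (isUnit_of_mem_Tset (hmem i hiI.1)).ne_zero h0
  · exact hiI.2 h0

lemma lsolv_ratio (hq : q.Prime) {I : Finset ι} {u : ι → ZMod q}
    (h : LSolv q I u) (hc2 : (I.filter (fun i => u i ≠ 0)).card = 2) :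
    ∀ i ∈ I, ∀ j ∈ I, u i ≠ 0 → u j ≠ 0 → ∃ c ∈ Tset q, u i = c * u j := by
  haveI : Fact q.Prime := ⟨hq⟩
  intro i hi j hj hui huj
  rcases eq_or_ne i j with rfl | hij
  · exact ⟨1, one_mem_Tset q, (one_mul _).symm⟩
  obtain ⟨a, hmem, hsum⟩ := h
  have hF : I.filter (fun i => u i ≠ 0) = {i, j} := by
    refine (Finset.eq_of_subset_of_card_le ?_ ?_).symm
    · intro k hk
      rcases Finset.mem_insert.mp hk with rfl | hk
      · exact Finset.mem_filter.mpr ⟨hi, hui⟩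
      · rw [Finset.mem_singleton.mp hk]
        exact Finset.mem_filter.mpr ⟨hj, huj⟩
    · rw [hc2, Finset.card_insert_of_notMem (by simpa using hij), Finset.card_singleton]
  rw [sum_eq_sum_filter, hF, Finset.sum_pair hij] at hsum
  obtain ⟨α, hα⟩ := hmem i hi
  obtain ⟨β, hβ⟩ := hmem j hj
  refine ⟨-((β : ZMod q) ^ 3 * ((α : ZMod q) ^ 3)⁻¹), ⟨-(β * α⁻¹), ?_⟩, ?_⟩
  · rw [Units.val_neg, Units.val_mul]
    rw [show ((α⁻¹ : (ZMod q)ˣ) : ZMod q) = ((α : ZMod q))⁻¹ from Units.val_inv_eq_inv_val α]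
    ring
  · have hs : (α : ZMod q) ^ 3 * u i + (β : ZMod q) ^ 3 * u j = 0 := by
      rw [hα, hβ]; exact hsum
    have h3 : (α : ZMod q) ^ 3 ≠ 0 := pow_ne_zero 3 (Units.ne_zero α)
    field_simp
    linear_combination hs


/-- Backward direction of the local characterization at a good prime. -/
lemma lsolv_of_cond (hq : q.Prime) (h2 : q ≠ 2) (h3 : q ≠ 3) (h7 : q ≠ 7) (h13 : q ≠ 13)
    (I : Finset ι) (u : ι → ZMod q)
    (hcard : (I.filter (fun i => u i ≠ 0)).card ≠ 1)
    (hratio : (I.filter (fun i => u i ≠ 0)).card = 2 →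
      ∀ i ∈ I, ∀ j ∈ I, u i ≠ 0 → u j ≠ 0 → ∃ c ∈ Tset q, u i = c * u j) :
    LSolv q I u := by
  haveI : Fact q.Prime := ⟨hq⟩
  set F := I.filter (fun i => u i ≠ 0) with hFdef
  have hFI : F ⊆ I := Finset.filter_subset _ _
  have hFu : ∀ i ∈ I, i ∉ F → u i = 0 := by
    intro i hi hni
    by_contra hne
    exact hni (Finset.mem_filter.mpr ⟨hi, hne⟩)
  rcases Nat.lt_or_ge F.card 2 with hlt | hge
  · -- card 0
    have hc0 : F.card = 0 := by omega
    refine lsolv_of_eq_zero ?_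
    intro i hi
    by_contra hne
    have : i ∈ F := Finset.mem_filter.mpr ⟨hi, hne⟩
    rw [Finset.card_eq_zero.mp hc0] at this
    exact absurd this (Finset.notMem_empty i)
  rcases Nat.eq_or_lt_of_le hge with hc2 | hc3
  · -- card 2
    obtain ⟨i, j, hij, hFij⟩ := Finset.card_eq_two.mp hc2.symm
    have hiF : i ∈ F := by rw [hFij]; exact Finset.mem_insert_self i _
    have hjF : j ∈ F := by rw [hFij]; exact Finset.mem_insert_of_mem (Finset.mem_singleton_self j)
    obtain ⟨c, hcT, hcuv⟩ := hratio hc2.symm i (hFI hiF) j (hFI hjF)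
      (Finset.mem_filter.mp hiF).2 (Finset.mem_filter.mp hjF).2
    refine ⟨fun l => if l = j then -c else 1, ?_, ?_⟩
    · intro l _
      by_cases hl : l = j
      · simp only [hl, if_pos rfl]
        exact neg_mem_Tset hcT
      · simp only [if_neg hl]
        exact one_mem_Tset q
    · rw [sum_eq_sum_filter, ← hFdef, hFij, Finset.sum_pair hij]
      rw [if_neg hij, if_pos rfl, hcuv]
      ring
  · -- card ≥ 3
    obtain ⟨i₁, h1F⟩ := Finset.card_pos.mp (by omega : 0 < F.card)
    have hcard1 : 0 < (F.erase i₁).card := by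
      rw [Finset.card_erase_of_mem h1F]; omega
    obtain ⟨i₂, h2F'⟩ := Finset.card_pos.mp hcard1
    have hcard2 : 0 < ((F.erase i₁).erase i₂).card := by
      rw [Finset.card_erase_of_mem h2F', Finset.card_erase_of_mem h1F]; omega
    obtain ⟨i₃, h3F'⟩ := Finset.card_pos.mp hcard2
    have h2F : i₂ ∈ F := Finset.mem_of_mem_erase h2F'
    have h3F : i₃ ∈ F := Finset.mem_of_mem_erase (Finset.mem_of_mem_erase h3F')
    have h21 : i₂ ≠ i₁ := Finset.ne_of_mem_erase h2F'
    have h32 : i₃ ≠ i₂ := Finset.ne_of_mem_erase h3F'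
    have h31 : i₃ ≠ i₁ := Finset.ne_of_mem_erase (Finset.mem_of_mem_erase h3F')
    have hu1 : u i₁ ≠ 0 := (Finset.mem_filter.mp h1F).2
    have hu2 : u i₂ ≠ 0 := (Finset.mem_filter.mp h2F).2
    have hu3 : u i₃ ≠ 0 := (Finset.mem_filter.mp h3F).2
    have h1I : i₁ ∈ I := hFI h1F
    have h2I : i₂ ∈ I := hFI h2F
    have h3I : i₃ ∈ I := hFI h3F
    -- the residual sum with weight ε at i₃ and 1 elsewhere
    set J := (I.erase i₁).erase i₂ with hJdef
    have h3J : i₃ ∈ J := Finset.mem_erase.mpr ⟨h32, Finset.mem_erase.mpr ⟨h31, h3I⟩⟩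
    set R : ZMod q := ∑ l ∈ J.erase i₃, u l with hRdef
    have hsJ : ∀ ε : ZMod q, ∑ l ∈ J, (if l = i₃ then ε else 1) * u l = ε * u i₃ + R := by
      intro ε
      rw [← Finset.add_sum_erase J _ h3J, if_pos rfl]
      congr 1
      refine Finset.sum_congr rfl fun l hl => ?_
      rw [if_neg (Finset.ne_of_mem_erase hl), one_mul]
    -- choose ε ∈ {1, -1} with ε * u i₃ + R ≠ 0
    obtain ⟨ε, hεT, hεs⟩ : ∃ ε : ZMod q, ε ∈ Tset q ∧ ε * u i₃ + R ≠ 0 := by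
      by_cases hR : 1 * u i₃ + R = 0
      · refine ⟨-1, neg_mem_Tset (one_mem_Tset q), ?_⟩
        intro hR'
        have h2u : (2 : ZMod q) * u i₃ = 0 := by linear_combination hR - hR'
        have h20 : (2 : ZMod q) ≠ 0 := by
          intro hcontra
          have hdvd : (q : ℕ) ∣ 2 := by
            refine (ZMod.natCast_eq_zero_iff 2 q).mp ?_
            push_cast
            exact hcontra
          have := Nat.le_of_dvd (by norm_num) hdvd
          have := hq.two_le
          omega
        rcases mul_eq_zero.mp h2u with h | h
        · exact h20 h
        · exact hu3 h
      · exact ⟨1, one_mem_Tset q, hR⟩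
    set s : ZMod q := ε * u i₃ + R with hsdef
    -- covering lemma
    obtain ⟨a, b, haT, hbT, hab⟩ := cov hq h2 h3 h7 h13
      (show u i₂ * (u i₁)⁻¹ ≠ 0 from mul_ne_zero hu2 (inv_ne_zero hu1))
      (show -s * (u i₁)⁻¹ ≠ 0 from mul_ne_zero (neg_ne_zero.mpr hεs) (inv_ne_zero hu1))
    refine ⟨fun l => if l = i₁ then a else if l = i₂ then b else if l = i₃ then ε else 1, ?_, ?_⟩
    · intro l _
      show (if l = i₁ then a else if l = i₂ then b else if l = i₃ then ε else 1) ∈ Tset q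
      rcases eq_or_ne l i₁ with rfl | hl1
      · simp only [if_pos rfl]; exact haT
      rcases eq_or_ne l i₂ with rfl | hl2
      · rw [if_neg hl1, if_pos rfl]; exact hbT
      rcases eq_or_ne l i₃ with rfl | hl3
      · rw [if_neg hl1, if_neg hl2, if_pos rfl]; exact hεT
      · rw [if_neg hl1, if_neg hl2, if_neg hl3]; exact one_mem_Tset q
    · have h2I' : i₂ ∈ I.erase i₁ := Finset.mem_erase.mpr ⟨h21, h2I⟩
      rw [← Finset.add_sum_erase I _ h1I, ← Finset.add_sum_erase _ _ h2I']
      simp only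
      rw [if_pos trivial, if_neg h21, if_pos trivial]
      have hJsum : ∑ l ∈ (I.erase i₁).erase i₂,
          (if l = i₁ then a else if l = i₂ then b else if l = i₃ then ε else 1) * u l
          = s := by
        rw [hsdef, ← hsJ ε, ← hJdef]
        refine Finset.sum_congr rfl fun l hl => ?_
        have hl2 : l ≠ i₂ := Finset.ne_of_mem_erase hl
        have hl1 : l ≠ i₁ := Finset.ne_of_mem_erase (Finset.mem_of_mem_erase hl)
        rw [if_neg hl1, if_neg hl2]
      rw [hJsum]
      have h := congrArg (fun z => z * u i₁) hab
      field_simp at h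
      have h' : a * u i₁ + u i₂ * b = -s :=
        mul_right_cancel₀ hu1 (by linear_combination u i₁ * h)
      linear_combination h'

/-- Union closure of solvability at a good prime. -/
lemma lsolv_union_prime [DecidableEq ι] (hq : q.Prime) (h2 : q ≠ 2) (h3 : q ≠ 3) (h7 : q ≠ 7) (h13 : q ≠ 13)
    {I₁ I₂ : Finset ι} {u : ι → ZMod q}
    (hs1 : LSolv q I₁ u) (hs2 : LSolv q I₂ u) : LSolv q (I₁ ∪ I₂) u := by
  haveI : Fact q.Prime := ⟨hq⟩
  have hFu : (I₁ ∪ I₂).filter (fun i => u i ≠ 0)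
      = I₁.filter (fun i => u i ≠ 0) ∪ I₂.filter (fun i => u i ≠ 0) :=
    Finset.filter_union _ _ _
  have hc1 := lsolv_card_ne_one hq hs1
  have hc2 := lsolv_card_ne_one hq hs2
  refine lsolv_of_cond hq h2 h3 h7 h13 _ _ ?_ ?_
  · -- card ≠ 1
    intro hcard
    rw [hFu] at hcard
    obtain ⟨i, hi⟩ := Finset.card_eq_one.mp hcard
    have hle1 : (I₁.filter (fun i => u i ≠ 0)).card ≤ 1 := by
      have hsub : I₁.filter (fun i => u i ≠ 0) ⊆ {i} := by
        rw [← hi]; exact Finset.subset_union_left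
      simpa using Finset.card_le_card hsub
    have hle2 : (I₂.filter (fun i => u i ≠ 0)).card ≤ 1 := by
      have hsub : I₂.filter (fun i => u i ≠ 0) ⊆ {i} := by
        rw [← hi]; exact Finset.subset_union_right
      simpa using Finset.card_le_card hsub
    have he1 : I₁.filter (fun i => u i ≠ 0) = ∅ := by
      rw [← Finset.card_eq_zero]; omega
    have he2 : I₂.filter (fun i => u i ≠ 0) = ∅ := by
      rw [← Finset.card_eq_zero]; omega
    rw [he1, he2, Finset.empty_union] at hi
    exact absurd (hi ▸ Finset.mem_singleton_self i) (Finset.notMem_empty i)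
  · -- ratio condition when card = 2
    intro hcard i hi j hj hui huj
    rcases eq_or_ne i j with rfl | hij
    · exact ⟨1, one_mem_Tset q, (one_mul _).symm⟩
    have hiF : i ∈ (I₁ ∪ I₂).filter (fun i => u i ≠ 0) := Finset.mem_filter.mpr ⟨hi, hui⟩
    have hjF : j ∈ (I₁ ∪ I₂).filter (fun i => u i ≠ 0) := Finset.mem_filter.mpr ⟨hj, huj⟩
    have hcij : ({i, j} : Finset ι).card = 2 := by
      rw [Finset.card_insert_of_notMem (by simpa using hij), Finset.card_singleton]
    have hFij : (I₁ ∪ I₂).filter (fun i => u i ≠ 0) = {i, j} := by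
      refine (Finset.eq_of_subset_of_card_le ?_ ?_).symm
      · intro k hk
        rcases Finset.mem_insert.mp hk with rfl | hk
        · exact hiF
        · rw [Finset.mem_singleton.mp hk]; exact hjF
      · rw [hcard, hcij]
    have key : ∀ (I' : Finset ι), LSolv q I' u → I'.filter (fun i => u i ≠ 0) = {i, j} →
        ∃ c ∈ Tset q, u i = c * u j := by
      intro I' hs hfil
      have hiI' : i ∈ I' :=
        (Finset.mem_filter.mp (show i ∈ I'.filter (fun i => u i ≠ 0) by
          rw [hfil]; exact Finset.mem_insert_self i _)).1
      have hjI' : j ∈ I' :=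
        (Finset.mem_filter.mp (show j ∈ I'.filter (fun i => u i ≠ 0) by
          rw [hfil]; exact Finset.mem_insert_of_mem (Finset.mem_singleton_self j))).1
      exact lsolv_ratio hq hs (by rw [hfil, hcij]) i hiI' j hjI' hui huj
    have hmem2 : i ∈ I₁.filter (fun i => u i ≠ 0) ∪ I₂.filter (fun i => u i ≠ 0) := by
      rw [← hFu]; exact hiF
    have hdo : ∀ (I' : Finset ι), LSolv q I' u →
        i ∈ I'.filter (fun i => u i ≠ 0) →
        I'.filter (fun i => u i ≠ 0) ⊆ {i, j} → ∃ c ∈ Tset q, u i = c * u j := by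
      intro I' hs hiI' hsub
      have hpos : 0 < (I'.filter (fun i => u i ≠ 0)).card := Finset.card_pos.mpr ⟨i, hiI'⟩
      have hle : (I'.filter (fun i => u i ≠ 0)).card ≤ 2 := by
        have := Finset.card_le_card hsub
        omega
      have hne1 := lsolv_card_ne_one hq hs
      have hceq : (I'.filter (fun i => u i ≠ 0)).card = 2 := by omega
      exact key I' hs (Finset.eq_of_subset_of_card_le hsub (by rw [hceq, hcij]))
    rcases Finset.mem_union.mp hmem2 with hi1 | hi2
    · exact hdo I₁ hs1 hi1 (by rw [← hFij, hFu]; exact Finset.subset_union_left)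
    · exact hdo I₂ hs2 hi2 (by rw [← hFij, hFu]; exact Finset.subset_union_right)

end PrimeStmt13
section CRTStmt13

open Finset

variable {M a b : ℕ}

lemma crt_fst (hM : M = a * b) (hab : a.Coprime b) (hda : a ∣ M) [NeZero a] [NeZero b]
    (z : ZMod M) :
    (((ZMod.ringEquivCongr hM).trans (ZMod.chineseRemainder hab)) z).1
      = ZMod.castHom hda (ZMod a) z :=
  RingHom.congr_fun (RingHom.ext_zmod
    ((RingHom.fst (ZMod a) (ZMod b)).comp
      (((ZMod.ringEquivCongr hM).trans (ZMod.chineseRemainder hab)) : ZMod M →+* ZMod a × ZMod b))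
    (ZMod.castHom hda (ZMod a))) z

lemma crt_snd (hM : M = a * b) (hab : a.Coprime b) (hdb : b ∣ M) [NeZero a] [NeZero b]
    (z : ZMod M) :
    (((ZMod.ringEquivCongr hM).trans (ZMod.chineseRemainder hab)) z).2
      = ZMod.castHom hdb (ZMod b) z :=
  RingHom.congr_fun (RingHom.ext_zmod
    ((RingHom.snd (ZMod a) (ZMod b)).comp
      (((ZMod.ringEquivCongr hM).trans (ZMod.chineseRemainder hab)) : ZMod M →+* ZMod a × ZMod b))
    (ZMod.castHom hdb (ZMod b))) z

lemma zmod_split_inj (hM : M = a * b) (hab : a.Coprime b) (hda : a ∣ M) (hdb : b ∣ M)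
    [NeZero a] [NeZero b] {z w : ZMod M}
    (h1 : ZMod.castHom hda (ZMod a) z = ZMod.castHom hda (ZMod a) w)
    (h2 : ZMod.castHom hdb (ZMod b) z = ZMod.castHom hdb (ZMod b) w) : z = w := by
  apply ((ZMod.ringEquivCongr hM).trans (ZMod.chineseRemainder hab)).injective
  refine Prod.ext ?_ ?_
  · rw [crt_fst hM hab hda, crt_fst hM hab hda, h1]
  · rw [crt_snd hM hab hdb, crt_snd hM hab hdb, h2]

lemma zmod_split_surj (hM : M = a * b) (hab : a.Coprime b) (hda : a ∣ M) (hdb : b ∣ M)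
    [NeZero a] [NeZero b] (α : ZMod a) (β : ZMod b) :
    ∃ z : ZMod M, ZMod.castHom hda (ZMod a) z = α ∧ ZMod.castHom hdb (ZMod b) z = β := by
  refine ⟨((ZMod.ringEquivCongr hM).trans (ZMod.chineseRemainder hab)).symm (α, β), ?_, ?_⟩
  · rw [← crt_fst hM hab hda, RingEquiv.apply_symm_apply]
  · rw [← crt_snd hM hab hdb, RingEquiv.apply_symm_apply]

lemma tset_split (hM : M = a * b) (hab : a.Coprime b) (hda : a ∣ M) (hdb : b ∣ M)
    [NeZero a] [NeZero b] {z : ZMod M} :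
    z ∈ Tset M ↔ ZMod.castHom hda (ZMod a) z ∈ Tset a ∧ ZMod.castHom hdb (ZMod b) z ∈ Tset b := by
  constructor
  · intro hz
    exact ⟨castHom_mem_Tset hda hz, castHom_mem_Tset hdb hz⟩
  · rintro ⟨⟨u, hu⟩, ⟨v, hv⟩⟩
    obtain ⟨z₀, hz₀a, hz₀b⟩ := zmod_split_surj hM hab hda hdb (u : ZMod a) (v : ZMod b)
    have hz₀unit : IsUnit z₀ := by
      have hpair : IsUnit (((ZMod.ringEquivCongr hM).trans (ZMod.chineseRemainder hab)) z₀) := by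
        have : (((ZMod.ringEquivCongr hM).trans (ZMod.chineseRemainder hab)) z₀)
            = ((u : ZMod a), (v : ZMod b)) := by
          refine Prod.ext ?_ ?_
          · rw [crt_fst hM hab hda]; exact hz₀a
          · rw [crt_snd hM hab hdb]; exact hz₀b
        rw [this]
        exact ⟨⟨((u : ZMod a), (v : ZMod b)), (((u⁻¹ : (ZMod a)ˣ) : ZMod a), ((v⁻¹ : (ZMod b)ˣ) : ZMod b)),
          by ext <;> simp, by ext <;> simp⟩, rfl⟩
      have := hpair.map (((ZMod.ringEquivCongr hM).trans (ZMod.chineseRemainder hab)).symm : ZMod a × ZMod b →+* ZMod M)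
      simpa using this
    have hcube : z₀ ^ 3 = z := by
      refine zmod_split_inj hM hab hda hdb ?_ ?_
      · rw [map_pow, hz₀a, hu]
      · rw [map_pow, hz₀b, hv]
    exact ⟨hz₀unit.unit, by rw [IsUnit.unit_spec]; exact hcube⟩

lemma lsolv_split (hM : M = a * b) (hab : a.Coprime b) (hda : a ∣ M) (hdb : b ∣ M)
    [NeZero a] [NeZero b] {ι : Type} (I : Finset ι) (u : ι → ZMod M) :
    LSolv M I u ↔ LSolv a I (fun i => ZMod.castHom hda (ZMod a) (u i))
      ∧ LSolv b I (fun i => ZMod.castHom hdb (ZMod b) (u i)) := by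
  constructor
  · rintro ⟨w, hw, hsum⟩
    constructor
    · refine ⟨fun i => ZMod.castHom hda (ZMod a) (w i),
        fun i hi => castHom_mem_Tset hda (hw i hi), ?_⟩
      have := congrArg (ZMod.castHom hda (ZMod a)) hsum
      rw [map_sum] at this
      simpa [map_mul] using this
    · refine ⟨fun i => ZMod.castHom hdb (ZMod b) (w i),
        fun i hi => castHom_mem_Tset hdb (hw i hi), ?_⟩
      have := congrArg (ZMod.castHom hdb (ZMod b)) hsum
      rw [map_sum] at this
      simpa [map_mul] using this
  · rintro ⟨⟨wa, hwa, hsa⟩, ⟨wb, hwb, hsb⟩⟩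
    choose w hw1 hw2 using fun i => zmod_split_surj hM hab hda hdb (wa i) (wb i)
    refine ⟨w, ?_, ?_⟩
    · intro i hi
      refine (tset_split hM hab hda hdb).mpr ⟨?_, ?_⟩
      · rw [hw1 i]; exact hwa i hi
      · rw [hw2 i]; exact hwb i hi
    · refine zmod_split_inj hM hab hda hdb ?_ ?_
      · rw [map_sum, map_zero]
        calc ∑ i ∈ I, ZMod.castHom hda (ZMod a) (w i * u i)
            = ∑ i ∈ I, wa i * ZMod.castHom hda (ZMod a) (u i) := by
              refine Finset.sum_congr rfl fun i _ => ?_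
              rw [map_mul, hw1 i]
          _ = 0 := hsa
      · rw [map_sum, map_zero]
        calc ∑ i ∈ I, ZMod.castHom hdb (ZMod b) (w i * u i)
            = ∑ i ∈ I, wb i * ZMod.castHom hdb (ZMod b) (u i) := by
              refine Finset.sum_congr rfl fun i _ => ?_
              rw [map_mul, hw2 i]
          _ = 0 := hsb

/-- Union closure of solvability for good squarefree odd moduli. -/
lemma lsolv_union_comp : ∀ (M : ℕ), Squarefree M → Odd M →
    (∀ r : ℕ, r.Prime → r ∣ M → r ≠ 3 ∧ r ≠ 7 ∧ r ≠ 13) →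
    ∀ {ι : Type} [DecidableEq ι] (I₁ I₂ : Finset ι) (u : ι → ZMod M),
      LSolv M I₁ u → LSolv M I₂ u → LSolv M (I₁ ∪ I₂) u := by
  intro M
  induction M using Nat.strong_induction_on with
  | _ M ih =>
    intro hsf hodd hfac ι instDE I₁ I₂ u h1 h2
    rcases eq_or_ne M 1 with rfl | hM1
    · exact ⟨fun _ => 1, fun i _ => one_mem_Tset 1, Subsingleton.elim _ _⟩
    have hM0 : M ≠ 0 := hsf.ne_zero
    have hqp : M.minFac.Prime := Nat.minFac_prime hM1
    have hqd : M.minFac ∣ M := Nat.minFac_dvd M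
    have hMeq : M = M.minFac * (M / M.minFac) := (Nat.mul_div_cancel' hqd).symm
    have hb0 : M / M.minFac ≠ 0 := by
      intro h
      rw [h, mul_zero] at hMeq
      exact hM0 hMeq
    have hbq : ¬ M.minFac ∣ (M / M.minFac) := by
      intro hdvd
      have : M.minFac * M.minFac ∣ M := by
        calc M.minFac * M.minFac ∣ M.minFac * (M / M.minFac) := mul_dvd_mul_left _ hdvd
          _ = M := hMeq.symm
      exact (Nat.squarefree_iff_prime_squarefree.mp hsf _ hqp) this
    have hcop : (M.minFac).Coprime (M / M.minFac) := (hqp.coprime_iff_not_dvd).mpr hbq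
    haveI : NeZero M.minFac := ⟨hqp.ne_zero⟩
    haveI : NeZero (M / M.minFac) := ⟨hb0⟩
    have hdb : (M / M.minFac) ∣ M := Nat.div_dvd_of_dvd hqd
    have hq2 : M.minFac ≠ 2 := by
      intro h
      have : Even M := (even_iff_two_dvd).mpr (h ▸ hqd)
      exact ((Nat.not_odd_iff_even.mpr this)) hodd
    obtain ⟨hq3, hq7, hq13⟩ := hfac _ hqp hqd
    have hoddb : Odd (M / M.minFac) := by
      rcases Nat.even_or_odd (M / M.minFac) with he | ho
      · exfalso
        have : Even M := by
          rw [hMeq]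
          exact he.mul_left _
        exact ((Nat.not_odd_iff_even.mpr this)) hodd
      · exact ho
    have hblt : M / M.minFac < M := by
      have h2q := hqp.two_le
      have hb1 : 1 ≤ M / M.minFac := Nat.pos_of_ne_zero hb0
      calc M / M.minFac < 2 * (M / M.minFac) := by omega
        _ ≤ M.minFac * (M / M.minFac) := Nat.mul_le_mul_right _ h2q
        _ = M := hMeq.symm
    rw [lsolv_split hMeq hcop hqd hdb] at h1 h2 ⊢
    refine ⟨lsolv_union_prime hqp hq2 hq3 hq7 hq13 h1.1 h2.1, ?_⟩
    exact ih _ hblt (hsf.squarefree_of_dvd hdb) hoddb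
      (fun r hr hrd => hfac r hr (hrd.trans hdb)) I₁ I₂ _ h1.2 h2.2

end CRTStmt13
section KeyStmt13

open Finset

/-- Relative upper bound: adding a prime `p ≡ 2 (mod 3)` increases the Davenport bound by 1. -/
lemma keyUB {N p n' : ℕ} (hN : N = p * n') (hp : p.Prime) (hp3 : p % 3 = 2)
    (hp2 : p ≠ 2) (hp7 : p ≠ 7) (hp13 : p ≠ 13)
    (hcop : p.Coprime n') (hsf' : Squarefree n') (hodd' : Odd n')
    (hfac' : ∀ r : ℕ, r.Prime → r ∣ n' → r ≠ 3 ∧ r ≠ 7 ∧ r ≠ 13)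
    {D' : ℕ} (hD' : ∀ f : Fin D' → ZMod n', HasWZS (Tset n') f)
    (g : Fin (D' + 1) → ZMod N) : HasWZS (Tset N) g := by
  haveI : Fact p.Prime := ⟨hp⟩
  haveI : NeZero p := ⟨hp.ne_zero⟩
  haveI : NeZero n' := ⟨hsf'.ne_zero⟩
  have hdp : p ∣ N := by rw [hN]; exact dvd_mul_right p n'
  have hdn : n' ∣ N := by rw [hN]; exact dvd_mul_left n' p
  have hpne3 : p ≠ 3 := by omega
  set u : Fin (D' + 1) → ZMod p := fun i => ZMod.castHom hdp (ZMod p) (g i) with hu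
  set v : Fin (D' + 1) → ZMod n' := fun i => ZMod.castHom hdn (ZMod n') (g i) with hv
  have step1 : ∀ j : Fin (D' + 1), ∃ I : Finset (Fin (D' + 1)),
      (I.Nonempty ∧ LSolv n' I v) ∧ j ∉ I := by
    intro j
    obtain ⟨I', hne, a, ha, hsum⟩ := hD' (v ∘ j.succAbove)
    refine ⟨I'.image j.succAbove, ⟨hne.image _, ?_⟩, ?_⟩
    · refine ⟨Function.extend j.succAbove a 1, ?_, ?_⟩
      · intro i hi
        obtain ⟨k, hk, rfl⟩ := Finset.mem_image.mp hi
        rw [(Fin.succAbove_right_injective (p := j)).extend_apply]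
        exact ha k hk
      · rw [Finset.sum_image (fun x _ y _ hxy => Fin.succAbove_right_injective hxy)]
        calc ∑ k ∈ I', Function.extend j.succAbove a 1 (j.succAbove k) * v (j.succAbove k)
            = ∑ k ∈ I', a k * (v ∘ j.succAbove) k := by
              refine Finset.sum_congr rfl fun k _ => ?_
              rw [(Fin.succAbove_right_injective (p := j)).extend_apply]
              rfl
          _ = 0 := hsum
    · intro hj
      obtain ⟨k, _, hk⟩ := Finset.mem_image.mp hj
      exact Fin.succAbove_ne j k hk
  have step2 : ∀ I : Finset (Fin (D' + 1)), I.Nonempty → LSolv n' I v →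
      (I.filter (fun i => u i ≠ 0)).card ≠ 1 → HasWZS (Tset N) g := by
    intro I hne hsolv hcard
    have hsolvp : LSolv p I u := by
      refine lsolv_of_cond hp hp2 hpne3 hp7 hp13 I u hcard ?_
      intro _ i hi j hj hui huj
      obtain ⟨x, hx⟩ := cube_surj_two hp hp3 (Units.mk0 (u i) hui * (Units.mk0 (u j) huj)⁻¹)
      have hxc : ((x : (ZMod p)ˣ) : ZMod p) ^ 3 = u i * (u j)⁻¹ := by
        have := congrArg (fun w : (ZMod p)ˣ => (w : ZMod p)) hx
        simpa [Units.val_pow_eq_pow_val, Units.val_mul, Units.val_inv_eq_inv_val] using this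
      refine ⟨((x : (ZMod p)ˣ) : ZMod p) ^ 3, ⟨x, rfl⟩, ?_⟩
      rw [hxc]
      field_simp
    have hsolvN : LSolv N I g := (lsolv_split hN hcop hdp hdn I g).mpr ⟨hsolvp, hsolv⟩
    obtain ⟨w, hw, hsum⟩ := hsolvN
    exact ⟨I, hne, w, hw, hsum⟩
  by_contra hcon
  have hforced : ∀ I : Finset (Fin (D' + 1)), I.Nonempty → LSolv n' I v →
      (I.filter (fun i => u i ≠ 0)).card = 1 := by
    intro I hne hsolv
    by_contra hne1
    exact hcon (step2 I hne hsolv hne1)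
  obtain ⟨I₁, ⟨hne₁, hsolv₁⟩, _⟩ := step1 0
  obtain ⟨i₀, hi₀⟩ := Finset.card_eq_one.mp (hforced I₁ hne₁ hsolv₁)
  obtain ⟨I₂, ⟨hne₂, hsolv₂⟩, hni₀⟩ := step1 i₀
  obtain ⟨i₁, hi₁⟩ := Finset.card_eq_one.mp (hforced I₂ hne₂ hsolv₂)
  have hUnion : LSolv n' (I₁ ∪ I₂) v :=
    lsolv_union_comp n' hsf' hodd' hfac' I₁ I₂ v hsolv₁ hsolv₂
  have hneU : (I₁ ∪ I₂).Nonempty :=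
    ⟨hne₁.choose, Finset.mem_union_left _ hne₁.choose_spec⟩
  have hcardU := hforced (I₁ ∪ I₂) hneU hUnion
  have hi₀mem : i₀ ∈ I₁.filter (fun i => u i ≠ 0) := by
    rw [hi₀]; exact Finset.mem_singleton_self _
  have hi₁mem : i₁ ∈ I₂.filter (fun i => u i ≠ 0) := by
    rw [hi₁]; exact Finset.mem_singleton_self _
  have hne01 : i₀ ≠ i₁ := by
    rintro rfl
    exact hni₀ (Finset.mem_filter.mp hi₁mem).1
  have hsub : ({i₀, i₁} : Finset (Fin (D' + 1))) ⊆ (I₁ ∪ I₂).filter (fun i => u i ≠ 0) := by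
    intro k hk
    rcases Finset.mem_insert.mp hk with rfl | hk
    · rw [Finset.filter_union]
      exact Finset.mem_union_left _ hi₀mem
    · rw [Finset.mem_singleton.mp hk, Finset.filter_union]
      exact Finset.mem_union_right _ hi₁mem
  have h21 : (2 : ℕ) ≤ 1 := by
    calc (2 : ℕ) = ({i₀, i₁} : Finset (Fin (D' + 1))).card := by
          rw [Finset.card_insert_of_notMem (by simpa using hne01), Finset.card_singleton]
      _ ≤ ((I₁ ∪ I₂).filter (fun i => u i ≠ 0)).card := Finset.card_le_card hsub
      _ = 1 := hcardU
  omega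

/-- Any sequence of length `m` over `ZMod m` has a `Tset`-weighted zero-sum (pigeonhole). -/
lemma hasWZS_self (m : ℕ) [NeZero m] (y : Fin m → ZMod m) : HasWZS (Tset m) y := by
  classical
  set y' : ℕ → ZMod m := fun i => if h : i < m then y ⟨i, h⟩ else 0 with hy'
  have main : ∀ a b : ℕ, a < b → b ≤ m →
      (∑ i ∈ Finset.range a, y' i) = (∑ i ∈ Finset.range b, y' i) → HasWZS (Tset m) y := by
    intro a b hab hbm heq
    have hsum0 : ∑ i ∈ Finset.Ico a b, y' i = 0 := by
      rw [Finset.sum_Ico_eq_sub _ (le_of_lt hab), ← heq, sub_self]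
    refine ⟨(Finset.Ico a b).attachFin (fun i hi => lt_of_lt_of_le (Finset.mem_Ico.mp hi).2 hbm),
      ?_, fun _ => 1, fun i _ => one_mem_Tset m, ?_⟩
    · refine ⟨⟨a, lt_of_lt_of_le hab hbm⟩, ?_⟩
      exact (Finset.mem_attachFin _).mpr (Finset.mem_Ico.mpr ⟨le_refl _, hab⟩)
    · calc ∑ i ∈ (Finset.Ico a b).attachFin _, 1 * y i
          = ∑ i ∈ Finset.Ico a b, y' i := by
            refine Finset.sum_bij (fun x _ => (x : ℕ)) ?_ ?_ ?_ ?_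
            · intro x hx
              exact (Finset.mem_attachFin _).mp hx
            · intro x _ z _ hxz
              exact Fin.val_injective hxz
            · intro k hk
              refine ⟨⟨k, lt_of_lt_of_le (Finset.mem_Ico.mp hk).2 hbm⟩, ?_, rfl⟩
              exact (Finset.mem_attachFin _).mpr hk
            · intro x _
              rw [one_mul, hy']
              simp only
              rw [dif_pos x.isLt]
        _ = 0 := hsum0
  have hcard : Fintype.card (ZMod m) < (Finset.range (m + 1)).card := by
    rw [Finset.card_range, ZMod.card]
    omega
  obtain ⟨k₁, hk₁, k₂, hk₂, hne, hSeq⟩ :=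
    Finset.exists_ne_map_eq_of_card_lt_of_maps_to hcard
      (f := fun k => ∑ i ∈ Finset.range k, y' i) (fun k _ => Finset.mem_univ _)
  rcases hne.lt_or_gt with hlt | hlt
  · exact main k₁ k₂ hlt (by have := Finset.mem_range.mp hk₂; omega) hSeq
  · exact main k₂ k₁ hlt (by have := Finset.mem_range.mp hk₁; omega) hSeq.symm

end KeyStmt13
theorem stmt13 (n n1 n2 : ℕ) (h : n = n1 * n2) (hsf : Squarefree n) (hodd : Odd n)
    (h7 : ¬ (7 ∣ n)) (h13 : ¬ (13 ∣ n))
    (h1 : ∀ p : ℕ, p.Prime → p ∣ n1 → p % 3 = 1)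
    (h2 : ∀ q : ℕ, q.Prime → q ∣ n2 → q % 3 = 2)
    (p : ℕ) (hp : p.Prime) (hpn2 : p ∣ n2)
    (ℓ : ℕ) (x : Fin ℓ → ZMod (n / p))
    (hx : IsExtremal (Tset (n / p)) x)
    (xs : ZMod n) (hxs : ¬ ((p : ZMod n) ∣ xs)) :
    IsExtremal (Tset n)
      (Fin.cons xs (fun i => (p : ZMod n) * (ZMod.cast (x i) : ZMod n))) := by
  have hn0 : n ≠ 0 := hsf.ne_zero
  have hpdvd : p ∣ n := dvd_trans hpn2 (by rw [h]; exact dvd_mul_left n2 n1)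
  have hneq : n = p * (n / p) := (Nat.mul_div_cancel' hpdvd).symm
  haveI : NeZero n := ⟨hn0⟩
  haveI : Fact p.Prime := ⟨hp⟩
  haveI : NeZero p := ⟨hp.ne_zero⟩
  have hpmod3 : p % 3 = 2 := h2 p hp hpn2
  have hfacn : ∀ r : ℕ, r.Prime → r ∣ n → r ≠ 2 ∧ r ≠ 3 ∧ r ≠ 7 ∧ r ≠ 13 := by
    intro r hr hrd
    refine ⟨?_, ?_, ?_, ?_⟩
    · rintro rfl
      exact (Nat.not_odd_iff_even.mpr ((even_iff_two_dvd).mpr hrd)) hodd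
    · rintro rfl
      rcases ((Nat.prime_three).dvd_mul).mp (h ▸ hrd) with h' | h'
      · have := h1 3 Nat.prime_three h'; omega
      · have := h2 3 Nat.prime_three h'; omega
    · rintro rfl; exact h7 hrd
    · rintro rfl; exact h13 hrd
  obtain ⟨hpne2, hpne3, hpne7, hpne13⟩ := hfacn p hp hpdvd
  have hndvd' : n / p ∣ n := Nat.div_dvd_of_dvd hpdvd
  have hsf' : Squarefree (n / p) := hsf.squarefree_of_dvd hndvd'
  haveI : NeZero (n / p) := ⟨hsf'.ne_zero⟩
  have hcop : p.Coprime (n / p) := by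
    refine (hp.coprime_iff_not_dvd).mpr ?_
    intro hdvd
    refine (Nat.squarefree_iff_prime_squarefree.mp hsf p hp) ?_
    calc p * p ∣ p * (n / p) := mul_dvd_mul_left p hdvd
      _ = n := hneq.symm
  have hodd' : Odd (n / p) := by
    rcases Nat.even_or_odd (n / p) with he | ho
    · exact absurd hodd (Nat.not_odd_iff_even.mpr (by rw [hneq]; exact he.mul_left p))
    · exact ho
  have hfac' : ∀ r : ℕ, r.Prime → r ∣ n / p → r ≠ 3 ∧ r ≠ 7 ∧ r ≠ 13 := fun r hr hrd =>
    ⟨(hfacn r hr (hrd.trans hndvd')).2.1, (hfacn r hr (hrd.trans hndvd')).2.2.1,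
     (hfacn r hr (hrd.trans hndvd')).2.2.2⟩
  obtain ⟨hxcount, hxfree⟩ := hx
  rw [Fintype.card_fin] at hxcount
  have hDdef' : DavA (n / p) (Tset (n / p))
      = sInf {L : ℕ | 0 < L ∧ ∀ f : Fin L → ZMod (n / p), HasWZS (Tset (n / p)) f} := rfl
  have hSne : {L : ℕ | 0 < L ∧ ∀ f : Fin L → ZMod (n / p), HasWZS (Tset (n / p)) f}.Nonempty := by
    by_contra hcon
    rw [Set.not_nonempty_iff_eq_empty] at hcon
    rw [hDdef', hcon, Nat.sInf_empty] at hxcount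
    omega
  have hmemS : (ℓ + 1) ∈ {L : ℕ | 0 < L ∧ ∀ f : Fin L → ZMod (n / p), HasWZS (Tset (n / p)) f} := by
    rw [hxcount, hDdef']
    exact Nat.sInf_mem hSne
  have hD' : ∀ f : Fin (ℓ + 1) → ZMod (n / p), HasWZS (Tset (n / p)) f := hmemS.2
  set Y : Fin (ℓ + 1) → ZMod n :=
    Fin.cons xs (fun i => (p : ZMod n) * (ZMod.cast (x i) : ZMod n)) with hY
  have hcastid : ∀ z : ZMod (n / p),
      ZMod.castHom hndvd' (ZMod (n / p)) (ZMod.cast z : ZMod n) = z := by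
    intro z
    have hval' : ((z.val : ℕ) : ZMod n) = (ZMod.cast z : ZMod n) := ZMod.natCast_val z
    calc ZMod.castHom hndvd' (ZMod (n / p)) (ZMod.cast z : ZMod n)
        = ZMod.castHom hndvd' (ZMod (n / p)) ((z.val : ℕ) : ZMod n) := by rw [hval']
      _ = ((z.val : ℕ) : ZMod (n / p)) := map_natCast _ _
      _ = z := ZMod.natCast_rightInverse z
  have key2 : ¬ HasWZS (Tset n) Y := by
    rintro ⟨I, hne, a, hmema, hsuma⟩
    by_cases h0 : (0 : Fin (ℓ + 1)) ∈ I
    · -- project mod p; the xs-term survives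
      have hπ := congrArg (ZMod.castHom hpdvd (ZMod p)) hsuma
      rw [map_sum, map_zero] at hπ
      have hterm : ∀ i ∈ I, i ≠ 0 → ZMod.castHom hpdvd (ZMod p) (a i * Y i) = 0 := by
        intro i _ hi0
        obtain ⟨j, rfl⟩ := Fin.eq_succ_of_ne_zero hi0
        rw [hY, Fin.cons_succ, map_mul, map_mul, map_natCast, ZMod.natCast_self, zero_mul,
          mul_zero]
      rw [Finset.sum_eq_single_of_mem (0 : Fin (ℓ + 1)) h0 hterm] at hπ
      rw [map_mul] at hπ
      have hu : IsUnit (ZMod.castHom hpdvd (ZMod p) (a 0)) :=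
        (isUnit_of_mem_Tset (hmema 0 h0)).map _
      have hxs0 : ZMod.castHom hpdvd (ZMod p) (Y 0) = 0 := by
        rcases mul_eq_zero.mp hπ with h' | h'
        · exact absurd h' hu.ne_zero
        · exact h'
      rw [hY, Fin.cons_zero] at hxs0
      apply hxs
      have hval : ((xs.val : ℕ) : ZMod n) = xs := ZMod.natCast_rightInverse xs
      have hv0 : ((xs.val : ℕ) : ZMod p) = 0 := by
        calc ((xs.val : ℕ) : ZMod p)
            = ZMod.castHom hpdvd (ZMod p) ((xs.val : ℕ) : ZMod n) := (map_natCast _ _).symm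
          _ = ZMod.castHom hpdvd (ZMod p) xs := by rw [hval]
          _ = 0 := hxs0
      obtain ⟨t, ht⟩ := (ZMod.natCast_eq_zero_iff _ _).mp hv0
      refine ⟨(t : ZMod n), ?_⟩
      rw [← hval, ht]
      push_cast
      ring
    · -- project mod n/p; contradict extremality of x
      have hπ := congrArg (ZMod.castHom hndvd' (ZMod (n / p))) hsuma
      rw [map_sum, map_zero] at hπ
      have hinj : Set.InjOn (Fin.succ : Fin ℓ → Fin (ℓ + 1)) (Fin.succ ⁻¹' I) :=
        (Fin.succ_injective ℓ).injOn
      set I' : Finset (Fin ℓ) := I.preimage Fin.succ hinj with hI'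
      have hsum' : ∑ j ∈ I', ZMod.castHom hndvd' (ZMod (n / p)) (a j.succ * Y j.succ) = 0 := by
        rw [Finset.sum_preimage Fin.succ I hinj
          (fun i => ZMod.castHom hndvd' (ZMod (n / p)) (a i * Y i)) ?_]
        · exact hπ
        · intro i hiI hir
          exfalso
          apply hir
          obtain ⟨j, rfl⟩ := Fin.eq_succ_of_ne_zero (fun h0' : i = 0 => h0 (h0' ▸ hiI))
          exact Set.mem_range_self j
      have hterm : ∀ j : Fin ℓ, ZMod.castHom hndvd' (ZMod (n / p)) (Y j.succ)
          = ((p : ℕ) : ZMod (n / p)) * x j := by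
        intro j
        rw [hY, Fin.cons_succ, map_mul, map_natCast, hcastid (x j)]
      have hmul : ((p : ℕ) : ZMod (n / p)) *
          ∑ j ∈ I', (ZMod.castHom hndvd' (ZMod (n / p)) (a j.succ)) * x j = 0 := by
        rw [Finset.mul_sum, ← hsum']
        refine Finset.sum_congr rfl fun j hj => ?_
        rw [map_mul, hterm j]
        ring
      have hpu : IsUnit ((p : ℕ) : ZMod (n / p)) :=
        ⟨ZMod.unitOfCoprime p hcop, ZMod.coe_unitOfCoprime p hcop⟩
      have hfinal : ∑ j ∈ I', (ZMod.castHom hndvd' (ZMod (n / p)) (a j.succ)) * x j = 0 :=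
        (hpu.mul_right_eq_zero).mp hmul
      have hne' : I'.Nonempty := by
        obtain ⟨i, hi⟩ := hne
        obtain ⟨j, rfl⟩ := Fin.eq_succ_of_ne_zero (fun h0' : i = 0 => h0 (h0' ▸ hi))
        exact ⟨j, Finset.mem_preimage.mpr hi⟩
      refine hxfree ⟨I', hne', fun j => ZMod.castHom hndvd' (ZMod (n / p)) (a j.succ),
        fun j hj => castHom_mem_Tset hndvd' (hmema j.succ (Finset.mem_preimage.mp hj)), hfinal⟩
  constructor
  · -- the Davenport count
    rw [Fintype.card_fin]
    have hDdefn : DavA n (Tset n)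
        = sInf {L : ℕ | 0 < L ∧ ∀ f : Fin L → ZMod n, HasWZS (Tset n) f} := rfl
    have hup : (ℓ + 1 + 1) ∈ {L : ℕ | 0 < L ∧ ∀ f : Fin L → ZMod n, HasWZS (Tset n) f} := by
      refine ⟨by omega, ?_⟩
      intro f
      exact keyUB hneq hp hpmod3 hpne2 hpne7 hpne13 hcop hsf' hodd' hfac' hD' f
    have hlow : ∀ L ∈ {L : ℕ | 0 < L ∧ ∀ f : Fin L → ZMod n, HasWZS (Tset n) f},
        ℓ + 1 + 1 ≤ L := by
      intro L hL
      by_contra hlt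
      push_neg at hlt
      have hwz : HasWZS (Tset n) (Y ∘ Fin.castLE (by omega : L ≤ ℓ + 1)) := hL.2 _
      exact key2 (HasWZS.of_comp (Fin.castLE_injective _) hwz)
    rw [hDdefn]
    exact (le_antisymm (Nat.sInf_le hup) (le_csInf ⟨_, hup⟩ hlow)).symm
  · exact key2
end

section
/- Let n = n_1 n_2 be a squarefree odd integer not divisible by 7 or 13, with n_1 a product of primes ≡ 1 (mod 3) and n_2 a product of primes ≡ 2 (mod 3). Let S be a sequence over Z/nZ of length ℓ = 2Ω(n_1) + Ω(n_2) and q a prime divisor of n_2. If every term of S is divisible by q, then S has a nonempty T_n-weighted zero-sum subsequence. -/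
open Finset

open scoped Classical

namespace Stmt15Aux

noncomputable def zeta3 : ℂ := Complex.exp (2 * Real.pi * Complex.I / 3)

lemma zeta3_prim : IsPrimitiveRoot zeta3 3 := by
  have h := Complex.isPrimitiveRoot_exp 3 (by norm_num)
  have : ((3 : ℕ) : ℂ) = (3 : ℂ) := by norm_num
  rw [this] at h
  exact h

lemma zeta3_ne_one : zeta3 ≠ 1 := by
  simpa using zeta3_prim.pow_ne_one_of_pos_of_lt one_ne_zero (by norm_num)

lemma zeta3_sq_ne_one : zeta3 ^ 2 ≠ 1 :=
  zeta3_prim.pow_ne_one_of_pos_of_lt two_ne_zero (by norm_num)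

lemma zeta3_ne_zero : zeta3 ≠ 0 := zeta3_prim.ne_zero (by norm_num)

lemma zeta3_sq_ne_self : zeta3 ^ 2 ≠ zeta3 := by
  intro hcon
  apply zeta3_ne_one
  have h2 : zeta3 * zeta3 = zeta3 * 1 := by rw [← pow_two, mul_one]; exact hcon
  exact mul_left_cancel₀ zeta3_ne_zero h2

lemma cube_root_cases {w : ℂ} (hw : w ^ 3 = 1) : w = 1 ∨ w = zeta3 ∨ w = zeta3 ^ 2 := by
  obtain ⟨i, hi, hiw⟩ := IsPrimitiveRoot.eq_pow_of_pow_eq_one zeta3_prim hw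
  interval_cases i
  · exact Or.inl (by simpa using hiw.symm)
  · exact Or.inr (Or.inl (by simpa using hiw.symm))
  · exact Or.inr (Or.inr hiw.symm)

section P1

variable {p : ℕ} [hpp : Fact p.Prime]

/-- Values of a character of order dividing 3 at nonzero points are cube roots of 1. -/
lemma chi_val_cube (χ : MulChar (ZMod p) ℂ) (hχ3 : χ ^ 3 = 1) {z : ZMod p} (hz : z ≠ 0) :
    (χ z) ^ 3 = 1 := by
  rw [← MulChar.pow_apply' χ (by norm_num) z, hχ3, MulChar.one_apply (hz.isUnit)]

lemma chi_ne_zero (χ : MulChar (ZMod p) ℂ) (hχ3 : χ ^ 3 = 1) {z : ZMod p} (hz : z ≠ 0) :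
    χ z ≠ 0 := by
  intro h
  have := chi_val_cube χ hχ3 hz
  rw [h] at this
  norm_num at this

/-- Existence of a cubic character detecting cubes. -/
lemma exists_cubic_char {p : ℕ} [hpp : Fact p.Prime] (hp1 : p % 3 = 1) :
    ∃ χ : MulChar (ZMod p) ℂ, χ ≠ 1 ∧ χ ^ 3 = 1 ∧
      ∀ z : ZMod p, z ≠ 0 → (χ z = 1 ↔ ∃ v : ZMod p, v ≠ 0 ∧ v ^ 3 = z) := by
  have hp2 : 2 ≤ p := hpp.out.two_le
  have hdvd : 3 ∣ Fintype.card (ZMod p) - 1 := by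
    rw [ZMod.card]
    omega
  obtain ⟨χ, hχord⟩ := MulChar.exists_mulChar_orderOf (ZMod p) hdvd zeta3_prim
  have hχ3 : χ ^ 3 = 1 := hχord ▸ pow_orderOf_eq_one χ
  have hχ1 : χ ≠ 1 := by
    intro hcon
    rw [hcon, orderOf_one] at hχord
    norm_num at hχord
  refine ⟨χ, hχ1, hχ3, ?_⟩
  obtain ⟨g, hg⟩ := IsCyclic.exists_generator (α := (ZMod p)ˣ)
  have hgen : ∀ a : (ZMod p)ˣ, ∃ k : ℕ, g ^ k = a := by
    intro a
    obtain ⟨k, hk⟩ := mem_powers_iff_mem_zpowers.mpr (hg a)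
    exact ⟨k, hk⟩
  have hχg3 : (χ (g : ZMod p)) ^ 3 = 1 := by
    rw [← MulChar.pow_apply' χ (by norm_num) (g : ZMod p), hχ3,
      MulChar.one_apply g.isUnit]
  have hχgne : χ (g : ZMod p) ≠ 1 := by
    intro hcon
    apply hχ1
    apply MulChar.ext
    intro a
    obtain ⟨k, hk⟩ := hgen a
    rw [← hk]
    rw [MulChar.one_apply (g ^ k).isUnit]
    have : ((g ^ k : (ZMod p)ˣ) : ZMod p) = ((g : ZMod p)) ^ k := Units.val_pow_eq_pow_val g k
    rw [this, map_pow, hcon, one_pow]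
  haveI : Fact (Nat.Prime 3) := ⟨by norm_num⟩
  have hord3 : orderOf (χ (g : ZMod p)) = 3 := orderOf_eq_prime hχg3 hχgne
  intro z hz
  have hzu : IsUnit z := hz.isUnit
  obtain ⟨k, hk⟩ := hgen hzu.unit
  have hzk : z = ((g : ZMod p)) ^ k := by
    rw [← Units.val_pow_eq_pow_val, hk, IsUnit.unit_spec]
  constructor
  · intro hχz
    have h3k : 3 ∣ k := by
      rw [← hord3]
      rw [orderOf_dvd_iff_pow_eq_one]
      rw [← map_pow, ← hzk, hχz]
    obtain ⟨m, rfl⟩ := h3k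
    refine ⟨((g : ZMod p)) ^ m, ?_, ?_⟩
    · have : ((g ^ m : (ZMod p)ˣ) : ZMod p) = ((g : ZMod p)) ^ m := Units.val_pow_eq_pow_val g m
      rw [← this]
      exact Units.ne_zero _
    · rw [← pow_mul, mul_comm m 3, ← hzk]
  · rintro ⟨v, hv0, rfl⟩
    rw [map_pow]
    have : (χ v) ^ 3 = 1 := by
      rw [← MulChar.pow_apply' χ (by norm_num) v, hχ3, MulChar.one_apply hv0.isUnit]
    exact this

lemma norm_one_of_cube {w : ℂ} (hw : w ^ 3 = 1) : ‖w‖ = 1 := by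
  have h1 : ‖w‖ ^ 3 = 1 := by
    rw [← norm_pow, hw, norm_one]
  nlinarith [norm_nonneg w, sq_nonneg (‖w‖ - 1), sq_nonneg (‖w‖ + 1)]

lemma chi_sq_ne_one (χ : MulChar (ZMod p) ℂ) (hχ1 : χ ≠ 1) (hχ3 : χ ^ 3 = 1) : χ ^ 2 ≠ 1 := by
  intro hcon
  apply hχ1
  have h : χ ^ 3 = χ ^ 2 * χ := pow_succ χ 2
  rw [h, hcon, one_mul] at hχ3
  exact hχ3

/-- `|J(φ,φ)| = √p` for a nontrivial character with `φ²` nontrivial. -/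
lemma norm_jacobiSum (φ : MulChar (ZMod p) ℂ) (hφ1 : φ ≠ 1) (hφ2 : φ * φ ≠ 1) :
    ‖jacobiSum φ φ‖ = Real.sqrt p := by
  have hchar : ringChar ℂ ≠ ringChar (ZMod p) := by
    rw [ringChar.eq_zero, ZMod.ringChar_zmod_n]
    exact fun h => hpp.out.ne_zero h.symm
  have hmul := jacobiSum_mul_jacobiSum_inv hchar hφ1 hφ1 hφ2
  have hconj : jacobiSum φ⁻¹ φ⁻¹ = (starRingEnd ℂ) (jacobiSum φ φ) := by
    rw [jacobiSum, jacobiSum, map_sum]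
    refine Finset.sum_congr rfl (fun x _ => ?_)
    rw [map_mul, starRingEnd_apply, starRingEnd_apply, MulChar.star_apply', MulChar.star_apply']
  rw [hconj, Complex.mul_conj, ZMod.card] at hmul
  have hnsq : Complex.normSq (jacobiSum φ φ) = (p : ℝ) := by exact_mod_cast hmul
  have h2 : ‖jacobiSum φ φ‖ ^ 2 = (p : ℝ) := by
    rw [Complex.sq_norm]
    exact hnsq
  rw [← Real.sqrt_sq (norm_nonneg (jacobiSum φ φ)), h2]

lemma norm_add8_le (a b c d e f g h : ℂ) :
    ‖a + b + c + d + e + f + g + h‖ ≤ ‖a‖ + ‖b‖ + ‖c‖ + ‖d‖ + ‖e‖ + ‖f‖ + ‖g‖ + ‖h‖ := by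
  calc ‖a + b + c + d + e + f + g + h‖
      ≤ ‖a + b + c + d + e + f + g‖ + ‖h‖ := norm_add_le _ _
    _ ≤ ‖a + b + c + d + e + f‖ + ‖g‖ + ‖h‖ := by gcongr; exact norm_add_le _ _
    _ ≤ ‖a + b + c + d + e‖ + ‖f‖ + ‖g‖ + ‖h‖ := by gcongr; exact norm_add_le _ _
    _ ≤ ‖a + b + c + d‖ + ‖e‖ + ‖f‖ + ‖g‖ + ‖h‖ := by gcongr; exact norm_add_le _ _
    _ ≤ ‖a + b + c‖ + ‖d‖ + ‖e‖ + ‖f‖ + ‖g‖ + ‖h‖ := by gcongr; exact norm_add_le _ _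
    _ ≤ ‖a + b‖ + ‖c‖ + ‖d‖ + ‖e‖ + ‖f‖ + ‖g‖ + ‖h‖ := by gcongr; exact norm_add_le _ _
    _ ≤ ‖a‖ + ‖b‖ + ‖c‖ + ‖d‖ + ‖e‖ + ‖f‖ + ‖g‖ + ‖h‖ := by gcongr; exact norm_add_le _ _

/-- Core character-sum lemma. -/
lemma core (hbig : 16 < p)
    (χ : MulChar (ZMod p) ℂ) (hχ1 : χ ≠ 1) (hχ3 : χ ^ 3 = 1)
    (hcube : ∀ z : ZMod p, z ≠ 0 → (χ z = 1 ↔ ∃ v : ZMod p, v ≠ 0 ∧ v ^ 3 = z))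
    {c1 c2 t : ZMod p} (hc1 : c1 ≠ 0) (hc2 : c2 ≠ 0) (ht : t ≠ 0) :
    ∃ x y : ZMod p, x ≠ 0 ∧ y ≠ 0 ∧ c1 * x ^ 3 + c2 * y ^ 3 = t := by
  by_contra hcon
  push_neg at hcon
  set α : ZMod p := t / c1 with hα
  set β : ZMod p := t / c2 with hβ
  have hα0 : α ≠ 0 := div_ne_zero ht hc1
  have hβ0 : β ≠ 0 := div_ne_zero ht hc2
  set D : Finset (ZMod p) := univ \ {0, 1} with hD
  have hmemD : ∀ w ∈ D, w ≠ 0 ∧ w ≠ 1 := by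
    intro w hw
    simp only [hD, mem_sdiff, mem_univ, mem_insert, mem_singleton, true_and, not_or] at hw
    exact hw
  have hnog : ∀ w ∈ D, χ (α * w) ≠ 1 ∨ χ (β * (1 - w)) ≠ 1 := by
    intro w hw
    obtain ⟨hw0, hw1⟩ := hmemD w hw
    by_contra hcon2
    push_neg at hcon2
    obtain ⟨ha, hb⟩ := hcon2
    obtain ⟨x, hx0, hx3⟩ := (hcube _ (mul_ne_zero hα0 hw0)).mp ha
    obtain ⟨y, hy0, hy3⟩ := (hcube _ (mul_ne_zero hβ0 (sub_ne_zero.mpr (Ne.symm hw1)))).mp hb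
    apply hcon x y hx0 hy0
    rw [hx3, hy3, hα, hβ]
    field_simp
    ring
  have hT0 : ∑ w ∈ D, ((1 + χ (α*w) + (χ (α*w))^2) * (1 + χ (β*(1-w)) + (χ (β*(1-w)))^2)) = 0 := by
    apply Finset.sum_eq_zero
    intro w hw
    obtain ⟨hw0, hw1⟩ := hmemD w hw
    have hfac : ∀ z : ZMod p, z ≠ 0 → χ z ≠ 1 → 1 + χ z + (χ z)^2 = 0 := by
      intro z hz hχz
      have h3 := chi_val_cube χ hχ3 hz
      have hfac2 : (χ z - 1) * (1 + χ z + (χ z)^2) = 0 := by linear_combination h3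
      rcases mul_eq_zero.mp hfac2 with hcase | hcase
      · exact absurd (by linear_combination hcase) hχz
      · exact hcase
    rcases hnog w hw with hcase | hcase
    · rw [hfac _ (mul_ne_zero hα0 hw0) hcase, zero_mul]
    · rw [hfac _ (mul_ne_zero hβ0 (sub_ne_zero.mpr (Ne.symm hw1))) hcase, mul_zero]
  have hexp : ∑ w ∈ D, ((1 + χ (α*w) + (χ (α*w))^2) * (1 + χ (β*(1-w)) + (χ (β*(1-w)))^2))
      = ∑ j ∈ range 3, ∑ k ∈ range 3, (χ^j) α * (χ^k) β * jacobiSum (χ^j) (χ^k) := by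
    have hfz : ∀ z : ZMod p, z ≠ 0 → (1 + χ z + (χ z)^2) = ∑ j ∈ range 3, (χ^j) z := by
      intro z hz
      rw [Finset.sum_range_succ, Finset.sum_range_succ, Finset.sum_range_one]
      rw [pow_zero, MulChar.one_apply hz.isUnit, pow_one, MulChar.pow_apply' χ (by norm_num) z]
    have step1 : ∀ w ∈ D, ((1 + χ (α*w) + (χ (α*w))^2) * (1 + χ (β*(1-w)) + (χ (β*(1-w)))^2))
        = ∑ j ∈ range 3, ∑ k ∈ range 3, ((χ^j) α * (χ^k) β) * ((χ^j) w * (χ^k) (1 - w)) := by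
      intro w hw
      obtain ⟨hw0, hw1⟩ := hmemD w hw
      rw [hfz _ (mul_ne_zero hα0 hw0), hfz _ (mul_ne_zero hβ0 (sub_ne_zero.mpr (Ne.symm hw1))),
        Finset.sum_mul_sum]
      refine Finset.sum_congr rfl (fun j _ => Finset.sum_congr rfl (fun k _ => ?_))
      rw [map_mul, map_mul]
      ring
    rw [Finset.sum_congr rfl step1, Finset.sum_comm]
    refine Finset.sum_congr rfl (fun j _ => ?_)
    rw [Finset.sum_comm]
    refine Finset.sum_congr rfl (fun k _ => ?_)
    rw [← Finset.mul_sum]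
    congr 1
    rw [jacobiSum]
    apply Finset.sum_subset (Finset.subset_univ D)
    intro x _ hx
    have hx01 : x = 0 ∨ x = 1 := by
      by_contra hno
      push_neg at hno
      exact hx (by simp [hD, hno.1, hno.2])
    rcases hx01 with rfl | rfl
    · rw [MulChar.map_nonunit (χ^j) (by simp [isUnit_iff_ne_zero]), zero_mul]
    · rw [sub_self, MulChar.map_nonunit (χ^k) (by simp [isUnit_iff_ne_zero]), mul_zero]
  rw [hexp] at hT0
  simp only [Finset.sum_range_succ, Finset.sum_range_zero, zero_add, pow_zero, pow_one] at hT0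
  -- value lemmas
  have h1α : (1 : MulChar (ZMod p) ℂ) α = 1 := MulChar.one_apply hα0.isUnit
  have h1β : (1 : MulChar (ZMod p) ℂ) β = 1 := MulChar.one_apply hβ0.isUnit
  have hJ11 : jacobiSum (1 : MulChar (ZMod p) ℂ) 1 = (p : ℂ) - 2 := by
    rw [jacobiSum_one_one, ZMod.card]
  have e00 : (1 : MulChar (ZMod p) ℂ) α * (1 : MulChar (ZMod p) ℂ) β
        * jacobiSum (1 : MulChar (ZMod p) ℂ) 1 = (p : ℂ) - 2 := by
    rw [h1α, h1β, hJ11, one_mul, one_mul]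
  have heq : (p : ℂ) - 2 =
      -((1 : MulChar (ZMod p) ℂ) α * χ β * jacobiSum 1 χ
        + (1 : MulChar (ZMod p) ℂ) α * (χ^2) β * jacobiSum 1 (χ^2)
        + χ α * (1 : MulChar (ZMod p) ℂ) β * jacobiSum χ 1
        + χ α * χ β * jacobiSum χ χ
        + χ α * (χ^2) β * jacobiSum χ (χ^2)
        + (χ^2) α * (1 : MulChar (ZMod p) ℂ) β * jacobiSum (χ^2) 1
        + (χ^2) α * χ β * jacobiSum (χ^2) χ
        + (χ^2) α * (χ^2) β * jacobiSum (χ^2) (χ^2)) := by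
    linear_combination hT0 - e00
  -- norms
  have hnχ : ∀ z : ZMod p, z ≠ 0 → ‖χ z‖ = 1 := fun z hz =>
    norm_one_of_cube (chi_val_cube χ hχ3 hz)
  have hnχ2 : ∀ z : ZMod p, z ≠ 0 → ‖(χ^2) z‖ = 1 := by
    intro z hz
    rw [MulChar.pow_apply' χ (by norm_num) z, norm_pow, hnχ z hz, one_pow]
  have hn1 : ∀ z : ZMod p, z ≠ 0 → ‖(1 : MulChar (ZMod p) ℂ) z‖ = 1 := by
    intro z hz
    rw [MulChar.one_apply hz.isUnit, norm_one]
  have hχ2ne : χ^2 ≠ 1 := chi_sq_ne_one χ hχ1 hχ3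
  have hJ1χ : ‖jacobiSum (1 : MulChar (ZMod p) ℂ) χ‖ = 1 := by
    rw [jacobiSum_one_nontrivial hχ1, norm_neg, norm_one]
  have hJ1χ2 : ‖jacobiSum (1 : MulChar (ZMod p) ℂ) (χ^2)‖ = 1 := by
    rw [jacobiSum_one_nontrivial hχ2ne, norm_neg, norm_one]
  have hJχ1 : ‖jacobiSum χ (1 : MulChar (ZMod p) ℂ)‖ = 1 := by
    rw [jacobiSum_comm]; exact hJ1χ
  have hJχ21 : ‖jacobiSum (χ^2) (1 : MulChar (ZMod p) ℂ)‖ = 1 := by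
    rw [jacobiSum_comm]; exact hJ1χ2
  have hinv : χ^2 = χ⁻¹ := by
    apply eq_inv_of_mul_eq_one_left
    rw [← pow_succ]
    exact hχ3
  have hm1 : (-1 : ZMod p) ≠ 0 := by
    simp
  have hJχχ2 : ‖jacobiSum χ (χ^2)‖ = 1 := by
    rw [hinv, jacobiSum_nontrivial_inv hχ1, norm_neg, hnχ _ hm1]
  have hJχ2χ : ‖jacobiSum (χ^2) χ‖ = 1 := by
    rw [jacobiSum_comm]; exact hJχχ2
  have hJχχ : ‖jacobiSum χ χ‖ = Real.sqrt p := by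
    apply norm_jacobiSum χ hχ1
    rw [← pow_two]
    exact hχ2ne
  have hJχ2χ2 : ‖jacobiSum (χ^2) (χ^2)‖ = Real.sqrt p := by
    apply norm_jacobiSum (χ^2) hχ2ne
    intro hcon4
    apply hχ1
    have h4 : (χ^2) * (χ^2) = χ^3 * χ := by
      rw [← pow_add, ← pow_succ]
    rw [h4, hχ3, one_mul] at hcon4
    exact hcon4
  -- final bound
  have hbound : ‖(p : ℂ) - 2‖ ≤ 6 + 2 * Real.sqrt p := by
    rw [heq, norm_neg]
    have h8 := norm_add8_le
      ((1 : MulChar (ZMod p) ℂ) α * χ β * jacobiSum 1 χ)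
      ((1 : MulChar (ZMod p) ℂ) α * (χ^2) β * jacobiSum 1 (χ^2))
      (χ α * (1 : MulChar (ZMod p) ℂ) β * jacobiSum χ 1)
      (χ α * χ β * jacobiSum χ χ)
      (χ α * (χ^2) β * jacobiSum χ (χ^2))
      ((χ^2) α * (1 : MulChar (ZMod p) ℂ) β * jacobiSum (χ^2) 1)
      ((χ^2) α * χ β * jacobiSum (χ^2) χ)
      ((χ^2) α * (χ^2) β * jacobiSum (χ^2) (χ^2))
    refine le_trans h8 ?_
    simp only [norm_mul]
    rw [hn1 _ hα0, hn1 _ hβ0, hnχ _ hα0, hnχ _ hβ0, hnχ2 _ hα0, hnχ2 _ hβ0,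
      hJ1χ, hJ1χ2, hJχ1, hJχ21, hJχχ2, hJχ2χ, hJχχ, hJχ2χ2]
    ring_nf
    nlinarith [Real.sqrt_nonneg (p : ℝ)]
  have hnormp : ‖(p : ℂ) - 2‖ = (p : ℝ) - 2 := by
    have hcast : ((p : ℂ) - 2) = (((p : ℝ) - 2 : ℝ) : ℂ) := by push_cast; ring
    rw [hcast, Complex.norm_real, Real.norm_eq_abs]
    rw [abs_of_nonneg (by
      have : (17 : ℝ) ≤ (p : ℝ) := by exact_mod_cast hbig
      linarith)]
  rw [hnormp] at hbound
  have hs2 : Real.sqrt p ^ 2 = (p : ℝ) := Real.sq_sqrt (by positivity)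
  have hs4 : 4 < Real.sqrt p := by
    rw [show (4:ℝ) = Real.sqrt 16 by
      rw [show (16:ℝ) = 4^2 by norm_num, Real.sqrt_sq (by norm_num)]]
    apply Real.sqrt_lt_sqrt (by norm_num)
    exact_mod_cast hbig
  nlinarith [hs2, hs4, hbound]

end P1

section EMap

variable {p : ℕ}

/-- encoding of the cubic class into `F₂ × F₂`. -/
noncomputable def eMap (χ : MulChar (ZMod p) ℂ) (z : ZMod p) : ZMod 2 × ZMod 2 :=
  if z = 0 then 0 else if χ z = 1 then (0, 1) else if χ z = zeta3 then (1, 0) else (1, 1)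

lemma eMap_zero (χ : MulChar (ZMod p) ℂ) : eMap χ 0 = 0 := by simp [eMap]

lemma eMap_ne_zero (χ : MulChar (ZMod p) ℂ) {z : ZMod p} (hz : z ≠ 0) : eMap χ z ≠ 0 := by
  rw [eMap, if_neg hz]
  split_ifs <;> simp [Prod.ext_iff]

end EMap

section P1a

variable {p : ℕ} [hpp : Fact p.Prime]

lemma eMap_cases (χ : MulChar (ZMod p) ℂ) (hχ3 : χ ^ 3 = 1) {z : ZMod p} (hz : z ≠ 0) :
    (χ z = 1 ∧ eMap χ z = (0, 1)) ∨ (χ z = zeta3 ∧ eMap χ z = (1, 0)) ∨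
      (χ z = zeta3 ^ 2 ∧ eMap χ z = (1, 1)) := by
  rcases cube_root_cases (chi_val_cube χ hχ3 hz) with hc | hc | hc
  · exact Or.inl ⟨hc, by rw [eMap, if_neg hz, if_pos hc]⟩
  · refine Or.inr (Or.inl ⟨hc, ?_⟩)
    rw [eMap, if_neg hz, if_neg (by rw [hc]; exact zeta3_ne_one), if_pos hc]
  · refine Or.inr (Or.inr ⟨hc, ?_⟩)
    rw [eMap, if_neg hz, if_neg (by rw [hc]; exact zeta3_sq_ne_one),
      if_neg (by rw [hc]; exact zeta3_sq_ne_self)]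

lemma eMap_inj (χ : MulChar (ZMod p) ℂ) (hχ3 : χ ^ 3 = 1) {z w : ZMod p}
    (hz : z ≠ 0) (hw : w ≠ 0) (he : eMap χ z = eMap χ w) : χ z = χ w := by
  rcases eMap_cases χ hχ3 hz with ⟨h1, e1⟩ | ⟨h1, e1⟩ | ⟨h1, e1⟩ <;>
    rcases eMap_cases χ hχ3 hw with ⟨h2, e2⟩ | ⟨h2, e2⟩ | ⟨h2, e2⟩ <;>
      rw [e1, e2] at he <;> first
        | (exact absurd he (by decide))
        | (exact h1.trans h2.symm)

end P1a

section P1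

variable {p : ℕ} [hpp : Fact p.Prime]

/-- The main local solver at primes `p ≡ 1 (mod 3)`. -/
lemma solver1 (hp1 : p % 3 = 1) (hp7 : p ≠ 7) (hp13 : p ≠ 13)
    (χ : MulChar (ZMod p) ℂ) (hχ1 : χ ≠ 1) (hχ3 : χ ^ 3 = 1)
    (hcube : ∀ z : ZMod p, z ≠ 0 → (χ z = 1 ↔ ∃ v : ZMod p, v ≠ 0 ∧ v ^ 3 = z))
    {ι : Type} (J : Finset ι) (y : ι → ZMod p)
    (hpar : ∑ i ∈ J, eMap χ (y i) = 0) :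
    ∃ a : ι → ZMod p, (∀ i ∈ J, ∃ w : ZMod p, w ≠ 0 ∧ w ^ 3 = a i) ∧
      ∑ i ∈ J, a i * y i = 0 := by
  classical
  have hbig : 16 < p := by
    by_contra hle
    push_neg at hle
    have h2 := hpp.out.two_le
    interval_cases p <;> first
      | (exact hp7 rfl)
      | (exact hp13 rfl)
      | (revert hp1; decide)
      | (have hpr := hpp.out; norm_num at hpr)
  set K := J.filter (fun i => y i ≠ 0) with hK
  have hKJ : K ⊆ J := filter_subset _ _
  have hy0 : ∀ i ∈ K, y i ≠ 0 := fun i hi => (mem_filter.mp hi).2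
  have hzero_off : ∀ i ∈ J, i ∉ K → eMap χ (y i) = 0 := by
    intro i hiJ hiK
    have hyi : y i = 0 := by
      by_contra hyi
      exact hiK (mem_filter.mpr ⟨hiJ, hyi⟩)
    rw [hyi, eMap_zero]
  have hparK : ∑ i ∈ K, eMap χ (y i) = 0 := by
    rw [Finset.sum_subset hKJ hzero_off]
    exact hpar
  -- helper: sum over J reduces to sum over K
  have hsum_red : ∀ a : ι → ZMod p, ∑ i ∈ J, a i * y i = ∑ i ∈ K, a i * y i := by
    intro a
    symm
    apply Finset.sum_subset hKJ
    intro i hiJ hiK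
    have hyi : y i = 0 := by
      by_contra hyi
      exact hiK (mem_filter.mpr ⟨hiJ, hyi⟩)
    rw [hyi, mul_zero]
  rcases hc3 : K.card with _ | _ | _ | m
  · -- card 0
    refine ⟨fun _ => 1, fun i _ => ⟨1, one_ne_zero, one_pow 3⟩, ?_⟩
    rw [hsum_red]
    rw [Finset.card_eq_zero.mp hc3]
    simp
  · -- card 1
    obtain ⟨i0, hK1⟩ := Finset.card_eq_one.mp hc3
    rw [hK1, Finset.sum_singleton] at hparK
    exact absurd hparK (eMap_ne_zero χ (hy0 i0 (hK1 ▸ Finset.mem_singleton_self i0)))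
  · -- card 2
    obtain ⟨i1, i2, hne, hK2⟩ := Finset.card_eq_two.mp hc3
    have hi1 : i1 ∈ K := hK2 ▸ Finset.mem_insert_self i1 {i2}
    have hi2 : i2 ∈ K := hK2 ▸ Finset.mem_insert_of_mem (Finset.mem_singleton_self i2)
    have hy1 := hy0 i1 hi1
    have hy2 := hy0 i2 hi2
    rw [hK2, Finset.sum_pair hne] at hparK
    have hee : eMap χ (y i1) = eMap χ (y i2) := by
      have hlem : ∀ a b : ZMod 2 × ZMod 2, a + b = 0 → a = b := by decide
      exact hlem _ _ hparK
    have hχeq : χ (y i1) = χ (y i2) := eMap_inj χ hχ3 hy1 hy2 hee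
    have hq : χ (y i1 / y i2) = 1 := by
      have hm : χ (y i1 / y i2) * χ (y i2) = χ (y i1) := by
        rw [← map_mul, div_mul_cancel₀ _ hy2]
      rw [hχeq] at hm
      have := mul_right_cancel₀ (chi_ne_zero χ hχ3 hy2) (hm.trans (one_mul _).symm)
      exact this
    obtain ⟨v, hv0, hv3⟩ := (hcube _ (div_ne_zero hy1 hy2)).mp hq
    refine ⟨fun i => if i = i2 then -(v^3) else 1, ?_, ?_⟩
    · intro i _
      dsimp only
      by_cases hii : i = i2
      · rw [if_pos hii]
        exact ⟨-v, neg_ne_zero.mpr hv0, by rw [Odd.neg_pow ⟨1, by norm_num⟩]⟩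
      · rw [if_neg hii]
        exact ⟨1, one_ne_zero, one_pow 3⟩
    · rw [hsum_red, hK2, Finset.sum_pair hne]
      rw [if_neg (by exact fun h => hne h), if_pos rfl, one_mul, hv3]
      field_simp
      ring
  · -- card ≥ 3
    have hc3' : 3 ≤ K.card := by omega
    -- an r with r³ ≠ 1
    have hr : ∃ r : ZMod p, r ≠ 0 ∧ r ^ 3 ≠ 1 := by
      by_contra hcon
      push_neg at hcon
      have hsub : univ.filter (fun r : ZMod p => r ≠ 0) ⊆
          (Polynomial.nthRoots 3 (1 : ZMod p)).toFinset := by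
        intro r hrr
        simp only [mem_filter, mem_univ, true_and] at hrr
        rw [Multiset.mem_toFinset, Polynomial.mem_nthRoots (by norm_num : 0 < 3)]
        exact hcon r hrr
      have hcard1 : (univ.filter (fun r : ZMod p => r ≠ 0)).card = p - 1 := by
        rw [Finset.filter_ne', Finset.card_erase_of_mem (mem_univ 0), card_univ, ZMod.card]
      have hcard2 := Finset.card_le_card hsub
      have hcard3 := (Polynomial.nthRoots 3 (1 : ZMod p)).toFinset_card_le
      have hcard4 := Polynomial.card_nthRoots 3 (1 : ZMod p)
      omega
    obtain ⟨i1, hi1⟩ := Finset.card_pos.mp (by omega : 0 < K.card)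
    obtain ⟨i2, hi2⟩ := Finset.card_pos.mp (by
      rw [Finset.card_erase_of_mem hi1]; omega : 0 < (K.erase i1).card)
    obtain ⟨i3, hi3⟩ := Finset.card_pos.mp (by
      rw [Finset.card_erase_of_mem hi2, Finset.card_erase_of_mem hi1]
      omega : 0 < ((K.erase i1).erase i2).card)
    have hne21 : i2 ≠ i1 := Finset.ne_of_mem_erase hi2
    have hne32 : i3 ≠ i2 := Finset.ne_of_mem_erase hi3
    have hne31 : i3 ≠ i1 := Finset.ne_of_mem_erase (Finset.mem_of_mem_erase hi3)
    have hi2K : i2 ∈ K := Finset.mem_of_mem_erase hi2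
    have hi3K : i3 ∈ K := Finset.mem_of_mem_erase (Finset.mem_of_mem_erase hi3)
    set s : ZMod p := ∑ i ∈ ((K.erase i1).erase i2).erase i3, y i with hs
    obtain ⟨c, hcw, hct⟩ : ∃ c : ZMod p, (∃ w : ZMod p, w ≠ 0 ∧ w ^ 3 = c) ∧
        s + c * y i3 ≠ 0 := by
      by_cases hcs : s + y i3 ≠ 0
      · exact ⟨1, ⟨1, one_ne_zero, one_pow 3⟩, by simpa using hcs⟩
      · push_neg at hcs
        obtain ⟨r, hr0, hr3⟩ := hr
        refine ⟨r ^ 3, ⟨r, hr0, rfl⟩, ?_⟩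
        have hrw : s + r ^ 3 * y i3 = (s + y i3) + (r ^ 3 - 1) * y i3 := by ring
        rw [hrw, hcs, zero_add]
        exact mul_ne_zero (sub_ne_zero.mpr hr3) (hy0 i3 hi3K)
    obtain ⟨x, v, hx0, hv0, hxv⟩ := core hbig χ hχ1 hχ3 hcube (hy0 i1 hi1) (hy0 i2 hi2K)
      (neg_ne_zero.mpr hct)
    -- weights
    set a : ι → ZMod p := fun i =>
      if i = i1 then x ^ 3 else if i = i2 then v ^ 3 else if i = i3 then c else 1 with ha
    refine ⟨a, ?_, ?_⟩
    · intro i _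
      show ∃ w : ZMod p, w ≠ 0 ∧ w ^ 3
        = (if i = i1 then x ^ 3 else if i = i2 then v ^ 3 else if i = i3 then c else 1)
      split_ifs
      · exact ⟨x, hx0, rfl⟩
      · exact ⟨v, hv0, rfl⟩
      · exact hcw
      · exact ⟨1, one_ne_zero, one_pow 3⟩
    · rw [hsum_red, ← Finset.sum_erase_add _ _ hi1, ← Finset.sum_erase_add _ _ hi2,
        ← Finset.sum_erase_add _ _ hi3]
      have hrest : ∑ i ∈ ((K.erase i1).erase i2).erase i3, a i * y i = s := by
        rw [hs]
        refine Finset.sum_congr rfl (fun i hi => ?_)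
        have hni3 : i ≠ i3 := Finset.ne_of_mem_erase hi
        have hni2 : i ≠ i2 := Finset.ne_of_mem_erase (Finset.mem_of_mem_erase hi)
        have hni1 : i ≠ i1 :=
          Finset.ne_of_mem_erase (Finset.mem_of_mem_erase (Finset.mem_of_mem_erase hi))
        show (if i = i1 then x ^ 3 else if i = i2 then v ^ 3 else if i = i3 then c else 1) * y i
          = y i
        rw [if_neg hni1, if_neg hni2, if_neg hni3, one_mul]
      have ha1 : a i1 = x ^ 3 := by
        show (if i1 = i1 then x ^ 3 else if i1 = i2 then v ^ 3 else if i1 = i3 then c else 1)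
          = x ^ 3
        rw [if_pos rfl]
      have ha2 : a i2 = v ^ 3 := by
        show (if i2 = i1 then x ^ 3 else if i2 = i2 then v ^ 3 else if i2 = i3 then c else 1)
          = v ^ 3
        rw [if_neg hne21, if_pos rfl]
      have ha3 : a i3 = c := by
        show (if i3 = i1 then x ^ 3 else if i3 = i2 then v ^ 3 else if i3 = i3 then c else 1) = c
        rw [if_neg hne31, if_neg hne32, if_pos rfl]
      rw [hrest, ha2, ha3]
      have ha1' : a i1 * y i1 = x ^ 3 * y i1 := by rw [ha1]
      rw [ha1']
      linear_combination hxv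

end P1


/-- Integer CRT over a finset of primes. -/
lemma intCRT (s : Finset ℕ) (hpr : ∀ p ∈ s, p.Prime) (r : ℕ → ℤ) :
    ∃ W : ℤ, ∀ p ∈ s, (p : ℤ) ∣ W - r p := by
  classical
  induction s using Finset.induction_on with
  | empty => exact ⟨0, by simp⟩
  | @insert p s hps ih =>
    obtain ⟨W, hW⟩ := ih (fun p hp => hpr p (mem_insert_of_mem hp))
    have hp : p.Prime := hpr p (mem_insert_self p s)
    have hcop : Nat.Coprime p (∏ x ∈ s, x) := by
      apply Nat.Coprime.prod_right
      intro x hx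
      exact (Nat.coprime_primes hp (hpr x (mem_insert_of_mem hx))).mpr
        (fun he => hps (he ▸ hx))
    have hcop' : IsCoprime (p : ℤ) ((∏ x ∈ s, x : ℕ) : ℤ) := by
      rw [Nat.isCoprime_iff_coprime]; exact hcop
    obtain ⟨u, v, huv⟩ := hcop'
    refine ⟨W + ((∏ x ∈ s, x : ℕ) : ℤ) * v * (r p - W), ?_⟩
    intro x hx
    rcases mem_insert.mp hx with rfl | hx
    · exact ⟨u * (W - r x), by linear_combination (r x - W) * huv⟩
    · have hdvd : (x : ℤ) ∣ ((∏ y ∈ s, y : ℕ) : ℤ) := by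
        exact_mod_cast Int.natCast_dvd_natCast.mpr (Finset.dvd_prod_of_mem _ hx)
      have h1 := hW x hx
      have : W + ((∏ y ∈ s, y : ℕ) : ℤ) * v * (r p - W) - r x
          = (W - r x) + ((∏ y ∈ s, y : ℕ) : ℤ) * (v * (r p - W)) := by ring
      rw [this]
      exact dvd_add h1 (Dvd.dvd.mul_right hdvd _)

/-- An element of `ZMod n` vanishing modulo every prime factor is zero (n squarefree). -/
lemma eq_zero_of_res {n : ℕ} (hn : n ≠ 0) (hsf : Squarefree n) (x : ZMod n)
    (h : ∀ p, p.Prime → ∀ hp : p ∣ n, ZMod.castHom hp (ZMod p) x = 0) : x = 0 := by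
  haveI : NeZero n := ⟨hn⟩
  have hdvd : ∀ p ∈ n.primeFactors, p ∣ x.val := by
    intro p hp
    have hpp := Nat.prime_of_mem_primeFactors hp
    have hpn := Nat.dvd_of_mem_primeFactors hp
    have := h p hpp hpn
    rw [ZMod.castHom_apply, ← ZMod.natCast_val, ZMod.natCast_eq_zero_iff] at this
    exact this
  have hprod : (∏ p ∈ n.primeFactors, p) ∣ x.val :=
    Finset.prod_primes_dvd _ (fun p hp => (Nat.prime_of_mem_primeFactors hp).prime) hdvd
  rw [Nat.prod_primeFactors_of_squarefree hsf] at hprod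
  exact (ZMod.val_eq_zero x).mp (Nat.eq_zero_of_dvd_of_lt hprod (ZMod.val_lt x))

/-- An element of `ZMod n` that is nonzero modulo every prime factor is a unit. -/
lemma isUnit_of_res {n : ℕ} (hn : n ≠ 0) (x : ZMod n)
    (h : ∀ p, p.Prime → ∀ hp : p ∣ n, ZMod.castHom hp (ZMod p) x ≠ 0) : IsUnit x := by
  haveI : NeZero n := ⟨hn⟩
  have hx : ((x.val : ℕ) : ZMod n) = x := by
    rw [ZMod.natCast_val, ZMod.cast_id]
  rw [← hx]
  rw [ZMod.isUnit_iff_coprime]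
  by_contra hcop
  obtain ⟨p, hpp, hp1, hp2⟩ := Nat.Prime.not_coprime_iff_dvd.mp hcop
  have := h p hpp (hp2)
  apply this
  rw [ZMod.castHom_apply, ← ZMod.natCast_val, ZMod.natCast_eq_zero_iff]
  exact hp1


/-- Every nonzero element is a cube when `p ≡ 2 (mod 3)`. -/
lemma cube_of_two_mod_three {p : ℕ} [hpp : Fact p.Prime] (hp2 : p % 3 = 2) (hodd : p ≠ 2)
    {z : ZMod p} (hz : z ≠ 0) : ∃ w : ZMod p, w ≠ 0 ∧ w ^ 3 = z := by
  have hp5 : 5 ≤ p := by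
    have := hpp.out.two_le
    rcases Nat.lt_or_ge p 5 with h | h
    · interval_cases p <;> simp_all <;> omega
    · exact h
  have hcop : Nat.Coprime 3 (p - 1) := by
    rw [Nat.Prime.coprime_iff_not_dvd Nat.prime_three]
    omega
  obtain ⟨m, -, hm⟩ := Nat.exists_mul_mod_eq_one_of_coprime hcop (by omega)
  refine ⟨z ^ m, pow_ne_zero m hz, ?_⟩
  rw [← pow_mul, mul_comm m 3]
  have hdm : 3 * m = (p - 1) * (3 * m / (p - 1)) + 1 := by
    conv_lhs => rw [← Nat.div_add_mod (3 * m) (p - 1)]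
    rw [hm, Nat.mul_comm]
  rw [hdm, pow_add, pow_mul, ZMod.pow_card_sub_one_eq_one hz, one_pow, one_mul, pow_one]

/-- The local solver at primes `p ≡ 2 (mod 3)`. -/
lemma solver2 {p : ℕ} [hpp : Fact p.Prime] (hp2 : p % 3 = 2) (hodd : p ≠ 2)
    {ι : Type} (J : Finset ι) (y : ι → ZMod p)
    (hpar : ∑ i ∈ J, (if y i = 0 then (0 : ZMod 2) else 1) = 0) :
    ∃ a : ι → ZMod p, (∀ i ∈ J, ∃ w : ZMod p, w ≠ 0 ∧ w ^ 3 = a i) ∧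
      ∑ i ∈ J, a i * y i = 0 := by
  classical
  set K := J.filter (fun i => y i ≠ 0) with hK
  have hKJ : K ⊆ J := filter_subset _ _
  have hy0 : ∀ i ∈ K, y i ≠ 0 := fun i hi => (mem_filter.mp hi).2
  have hcard : ((K.card : ℕ) : ZMod 2) = 0 := by
    have heq : ∑ i ∈ J, (if y i = 0 then (0:ZMod 2) else 1) = ∑ _i ∈ K, (1:ZMod 2) := by
      rw [hK, Finset.sum_filter]
      apply Finset.sum_congr rfl
      intro i _
      by_cases hyi : y i = 0 <;> simp [hyi]
    rw [heq] at hpar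
    simpa using hpar
  have h2d : 2 ∣ K.card := by
    rwa [ZMod.natCast_eq_zero_iff] at hcard
  rcases Nat.eq_zero_or_pos K.card with hK0 | hKpos
  · refine ⟨fun _ => 1, fun i _ => ⟨1, one_ne_zero, one_pow 3⟩, ?_⟩
    refine Finset.sum_eq_zero (fun i hi => ?_)
    have hyi : y i = 0 := by
      by_contra hyi
      have : i ∈ K := mem_filter.mpr ⟨hi, hyi⟩
      simp [Finset.card_eq_zero.mp hK0] at this
    rw [hyi, mul_zero]
  · have hK2 : 2 ≤ K.card := by omega
    obtain ⟨i0, hi0⟩ := Finset.card_pos.mp hKpos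
    obtain ⟨j0, hj0⟩ := Finset.card_pos.mp (by rw [Finset.card_erase_of_mem hi0]; omega :
      0 < (K.erase i0).card)
    obtain ⟨u, hu_ne, hu_sum⟩ :
        ∃ u : ι → ZMod p, (∀ i, u i ≠ 0) ∧ (∑ i ∈ K.erase i0, u i * y i) ≠ 0 := by
      by_cases hs : (∑ i ∈ K.erase i0, y i) ≠ 0
      · exact ⟨fun _ => 1, fun _ => one_ne_zero, by simpa using hs⟩
      · push_neg at hs
        have h2p : (2 : ZMod p) ≠ 0 := by
          have : ((2:ℕ) : ZMod p) ≠ 0 := by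
            rw [Ne, ZMod.natCast_eq_zero_iff]
            intro hdd
            exact hodd ((Nat.prime_dvd_prime_iff_eq hpp.out Nat.prime_two).mp hdd)
          simpa using this
        refine ⟨fun i => if i = j0 then 2 else 1, fun i => ?_, ?_⟩
        · dsimp only
          split_ifs
          · exact h2p
          · exact one_ne_zero
        · have hsplit : ∑ i ∈ K.erase i0, (if i = j0 then (2:ZMod p) else 1) * y i
              = (∑ i ∈ K.erase i0, y i) + y j0 := by
            rw [← Finset.sum_erase_add _ _ hj0, ← Finset.sum_erase_add (K.erase i0) y hj0]
            have h1 : ∑ i ∈ (K.erase i0).erase j0, (if i = j0 then (2:ZMod p) else 1) * y i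
                = ∑ i ∈ (K.erase i0).erase j0, y i := by
              apply Finset.sum_congr rfl
              intro i hi
              rw [if_neg (Finset.ne_of_mem_erase hi), one_mul]
            rw [h1, if_pos rfl]
            ring
          rw [hsplit, hs, zero_add]
          exact hy0 j0 (Finset.mem_of_mem_erase hj0)
    set s : ZMod p := ∑ i ∈ K.erase i0, u i * y i with hs
    set a : ι → ZMod p := fun i => if i = i0 then -s / y i0 else u i with ha
    have ha_ne : ∀ i ∈ K, a i ≠ 0 := by
      intro i hi
      rw [ha]
      dsimp only
      split_ifs
      · exact div_ne_zero (neg_ne_zero.mpr hu_sum) (hy0 i0 hi0)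
      · exact hu_ne i
    refine ⟨fun i => if i ∈ K then a i else 1, ?_, ?_⟩
    · intro i hi
      by_cases hiK : i ∈ K
      · simp only [if_pos hiK]
        exact cube_of_two_mod_three hp2 hodd (ha_ne i hiK)
      · simp only [if_neg hiK]
        exact ⟨1, one_ne_zero, one_pow 3⟩
    · rw [← Finset.sum_subset hKJ (by
        intro i hiJ hiK
        have hyi : y i = 0 := by
          by_contra hyi
          exact hiK (mem_filter.mpr ⟨hiJ, hyi⟩)
        rw [hyi, mul_zero])]
      have h1 : ∑ i ∈ K, (if i ∈ K then a i else 1) * y i = ∑ i ∈ K, a i * y i :=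
        Finset.sum_congr rfl (fun i hi => by rw [if_pos hi])
      rw [h1, ← Finset.sum_erase_add _ _ hi0]
      have h2 : ∑ i ∈ K.erase i0, a i * y i = s := by
        rw [hs]
        refine Finset.sum_congr rfl (fun i hi => ?_)
        rw [ha]
        dsimp only
        rw [if_neg (Finset.ne_of_mem_erase hi)]
      rw [h2, ha]
      dsimp only
      rw [if_pos rfl, div_mul_cancel₀ _ (hy0 i0 hi0)]
      ring

lemma omega_eq_card {m : ℕ} (hm : m ≠ 0) (hsf : Squarefree m) :
    m.primeFactors.card = Omega m := by
  rw [Omega, Nat.primeFactors, List.toFinset_card_of_nodup]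
  exact (Nat.squarefree_iff_nodup_primeFactorsList hm).mp hsf


end Stmt15Aux

open Stmt15Aux in
theorem stmt15 (n n1 n2 : ℕ) (h : n = n1 * n2) (hsf : Squarefree n) (hodd : Odd n)
    (h7 : ¬ (7 ∣ n)) (h13 : ¬ (13 ∣ n))
    (h1 : ∀ p : ℕ, p.Prime → p ∣ n1 → p % 3 = 1)
    (h2 : ∀ q : ℕ, q.Prime → q ∣ n2 → q % 3 = 2)
    (q : ℕ) (hq : q.Prime) (hqn2 : q ∣ n2)
    (S : Fin (2 * Omega n1 + Omega n2) → ZMod n)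
    (hdvd : ∀ i, (q : ZMod n) ∣ S i) :
    HasWZS (Tset n) S := by
  classical
  have hn0 : n ≠ 0 := by
    rintro rfl
    simp [Nat.odd_iff] at hodd
  have hn1 : n1 ≠ 0 := by rintro rfl; rw [zero_mul] at h; exact hn0 h
  have hn2 : n2 ≠ 0 := by rintro rfl; rw [mul_zero] at h; exact hn0 h
  haveI : NeZero n := ⟨hn0⟩
  have hsf1 : Squarefree n1 := hsf.squarefree_of_dvd ⟨n2, h⟩
  have hsf2 : Squarefree n2 := hsf.squarefree_of_dvd ⟨n1, by rw [h, mul_comm]⟩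
  by_cases hz : ∃ i, S i = 0
  · obtain ⟨i, hi⟩ := hz
    exact ⟨{i}, Finset.singleton_nonempty i, fun _ => 1,
      fun j _ => ⟨1, by simp⟩, by rw [Finset.sum_singleton, one_mul, hi]⟩
  push_neg at hz
  have hpn : ∀ p ∈ n.primeFactors, p ∣ n := fun p hp => Nat.dvd_of_mem_primeFactors hp
  have hPP : ∀ p ∈ n.primeFactors, p.Prime := fun p hp => Nat.prime_of_mem_primeFactors hp
  set P1 : Finset ℕ := n1.primeFactors with hP1def
  set P2 : Finset ℕ := n2.primeFactors.erase q with hP2def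
  have hqmem : q ∈ n2.primeFactors := Nat.mem_primeFactors.mpr ⟨hq, hqn2, hn2⟩
  have hunion : n.primeFactors = n1.primeFactors ∪ n2.primeFactors := by
    rw [h, Nat.primeFactors_mul hn1 hn2]
  have hP1n : ∀ p ∈ P1, p ∈ n.primeFactors := by
    intro p hp
    rw [hunion]
    exact Finset.mem_union_left _ hp
  have hP2n : ∀ p ∈ P2, p ∈ n.primeFactors := by
    intro p hp
    rw [hunion]
    exact Finset.mem_union_right _ (Finset.mem_of_mem_erase hp)
  have hP1facts : ∀ p ∈ P1, p.Prime ∧ p % 3 = 1 ∧ p ≠ 7 ∧ p ≠ 13 := by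
    intro p hp
    have hpp : p.Prime := Nat.prime_of_mem_primeFactors hp
    have hdvd1 : p ∣ n1 := Nat.dvd_of_mem_primeFactors hp
    refine ⟨hpp, h1 p hpp hdvd1, ?_, ?_⟩
    · rintro rfl; exact h7 (hdvd1.trans ⟨n2, h⟩)
    · rintro rfl; exact h13 (hdvd1.trans ⟨n2, h⟩)
  have hodd' : ∀ p ∈ n.primeFactors, p ≠ 2 := by
    intro p hp hp2
    obtain ⟨k, hk⟩ := hpn p hp
    obtain ⟨m, hm⟩ := hodd
    rw [hp2] at hk
    omega
  have hP2facts : ∀ p ∈ P2, p.Prime ∧ p % 3 = 2 ∧ p ≠ 2 := by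
    intro p hp
    have hp' := Finset.mem_of_mem_erase hp
    have hpp : p.Prime := Nat.prime_of_mem_primeFactors hp'
    exact ⟨hpp, h2 p hpp (Nat.dvd_of_mem_primeFactors hp'), hodd' p (hP2n p hp)⟩
  -- choose cubic characters at the primes of n1
  have hchars : ∀ p, ∀ hp : p ∈ P1, ∃ χ : MulChar (ZMod p) ℂ, χ ≠ 1 ∧ χ ^ 3 = 1 ∧
      ∀ z : ZMod p, z ≠ 0 → (χ z = 1 ↔ ∃ v : ZMod p, v ≠ 0 ∧ v ^ 3 = z) := by
    intro p hp
    haveI : Fact p.Prime := ⟨(hP1facts p hp).1⟩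
    exact exists_cubic_char (hP1facts p hp).2.1
  choose χf hχ1 hχ3 hχcube using hchars
  -- the ZMod 2 vectors
  let v : Fin (2 * Omega n1 + Omega n2) → ((↥P1 ⊕ ↥P1) ⊕ ↥P2) → ZMod 2 := fun i =>
    Sum.elim
      (Sum.elim
        (fun pa : ↥P1 =>
          (eMap (χf pa.1 pa.2) (ZMod.castHom (hpn pa.1 (hP1n pa.1 pa.2)) (ZMod pa.1) (S i))).1)
        (fun pa : ↥P1 =>
          (eMap (χf pa.1 pa.2) (ZMod.castHom (hpn pa.1 (hP1n pa.1 pa.2)) (ZMod pa.1) (S i))).2))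
      (fun pq : ↥P2 =>
        if ZMod.castHom (hpn pq.1 (hP2n pq.1 pq.2)) (ZMod pq.1) (S i) = 0 then 0 else 1)
  have hΩ2 : 1 ≤ Omega n2 := by
    rw [← omega_eq_card hn2 hsf2]
    exact Finset.card_pos.mpr ⟨q, hqmem⟩
  have hcards : Fintype.card ((↥P1 ⊕ ↥P1) ⊕ ↥P2) + 1 = 2 * Omega n1 + Omega n2 := by
    rw [Fintype.card_sum, Fintype.card_sum, Fintype.card_coe, Fintype.card_coe]
    have e1 : P1.card = Omega n1 := omega_eq_card hn1 hsf1
    have e2 : P2.card = Omega n2 - 1 := by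
      rw [hP2def, Finset.card_erase_of_mem hqmem, omega_eq_card hn2 hsf2]
    omega
  have hnotli : ¬ LinearIndependent (ZMod 2) v := by
    intro hli
    have hle := hli.fintype_card_le_finrank
    rw [Module.finrank_pi, Fintype.card_fin] at hle
    omega
  obtain ⟨g, hgsum, i₀, hgi₀⟩ := Fintype.not_linearIndependent_iff.mp hnotli
  set J : Finset (Fin (2 * Omega n1 + Omega n2)) := Finset.univ.filter (fun i => g i ≠ 0) with hJdef
  have hJne : J.Nonempty := ⟨i₀, Finset.mem_filter.mpr ⟨Finset.mem_univ _, hgi₀⟩⟩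
  have hg1 : ∀ i ∈ J, g i = 1 := by
    intro i hi
    have hne := (Finset.mem_filter.mp hi).2
    revert hne
    generalize g i = z
    revert z
    decide
  have hvsum : ∀ idx, ∑ i ∈ J, v i idx = 0 := by
    intro idx
    have h0 := congrFun hgsum idx
    rw [Finset.sum_apply] at h0
    have hval : ∑ i : Fin (2 * Omega n1 + Omega n2), g i * v i idx = 0 := by
      simpa [Pi.smul_apply, smul_eq_mul] using h0
    calc ∑ i ∈ J, v i idx = ∑ i ∈ J, g i * v i idx :=
          Finset.sum_congr rfl (fun i hi => by rw [hg1 i hi, one_mul])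
      _ = ∑ i : Fin (2 * Omega n1 + Omega n2), g i * v i idx := by
          apply Finset.sum_subset (Finset.subset_univ J)
          intro i _ hiJ
          have hgz : g i = 0 := by
            by_contra hne
            exact hiJ (Finset.mem_filter.mpr ⟨Finset.mem_univ _, hne⟩)
          rw [hgz, zero_mul]
      _ = 0 := hval
  -- local solutions
  have hloc : ∀ p, ∀ hp : p ∈ n.primeFactors, ∃ a : Fin (2 * Omega n1 + Omega n2) → ZMod p,
      (∀ i ∈ J, ∃ w : ZMod p, w ≠ 0 ∧ w ^ 3 = a i) ∧
      ∑ i ∈ J, a i * (ZMod.castHom (hpn p hp) (ZMod p) (S i)) = 0 := by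
    intro p hp
    haveI hfp : Fact p.Prime := ⟨hPP p hp⟩
    by_cases hpq : p = q
    · refine ⟨fun _ => 1, fun i _ => ⟨1, one_ne_zero, one_pow 3⟩, ?_⟩
      apply Finset.sum_eq_zero
      intro i _
      obtain ⟨c, hc⟩ := hdvd i
      rw [one_mul]
      have hsplit : ZMod.castHom (hpn p hp) (ZMod p) (S i)
          = ZMod.castHom (hpn p hp) (ZMod p) ((q : ZMod n))
            * ZMod.castHom (hpn p hp) (ZMod p) c := by
        rw [← map_mul, ← hc]
      have hq0 : ((q : ℕ) : ZMod p) = 0 :=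
        (ZMod.natCast_eq_zero_iff q p).mpr (dvd_of_eq hpq)
      rw [hsplit, map_natCast, hq0, zero_mul]
    · have hcases : p ∈ P1 ∨ p ∈ P2 := by
        rw [hunion] at hp
        rcases Finset.mem_union.mp hp with hca | hca
        · exact Or.inl hca
        · exact Or.inr (Finset.mem_erase.mpr ⟨hpq, hca⟩)
      rcases hcases with hca | hca
      · obtain ⟨hpp, hp3, hp7', hp13'⟩ := hP1facts p hca
        apply solver1 hp3 hp7' hp13' (χf p hca) (hχ1 p hca) (hχ3 p hca) (hχcube p hca)
        have hfsteq := hvsum (Sum.inl (Sum.inl ⟨p, hca⟩))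
        have hsndeq := hvsum (Sum.inl (Sum.inr ⟨p, hca⟩))
        have hfst : (∑ i ∈ J,
            eMap (χf p hca) (ZMod.castHom (hpn p hp) (ZMod p) (S i))).1
            = ∑ i ∈ J, (eMap (χf p hca) (ZMod.castHom (hpn p hp) (ZMod p) (S i))).1 :=
          map_sum (AddMonoidHom.fst (ZMod 2) (ZMod 2)) _ J
        have hsnd : (∑ i ∈ J,
            eMap (χf p hca) (ZMod.castHom (hpn p hp) (ZMod p) (S i))).2
            = ∑ i ∈ J, (eMap (χf p hca) (ZMod.castHom (hpn p hp) (ZMod p) (S i))).2 :=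
          map_sum (AddMonoidHom.snd (ZMod 2) (ZMod 2)) _ J
        apply Prod.ext
        · rw [hfst]
          exact hfsteq
        · rw [hsnd]
          exact hsndeq
      · obtain ⟨hpp, hp3, hp2'⟩ := hP2facts p hca
        apply solver2 hp3 hp2'
        exact hvsum (Sum.inr ⟨p, hca⟩)
  choose ap hapw hapsum using hloc
  -- glue the local weights via CRT
  have hglob : ∀ i : Fin (2 * Omega n1 + Omega n2), i ∈ J → ∃ A : ZMod n, (∃ u : (ZMod n)ˣ, ((u : ZMod n)) ^ 3 = A) ∧
      ∀ p, ∀ hp : p ∈ n.primeFactors, ZMod.castHom (hpn p hp) (ZMod p) A = ap p hp i := by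
    intro i hi
    choose wf hw0 hw3 using fun p (hp : p ∈ n.primeFactors) => hapw p hp i hi
    obtain ⟨W, hW⟩ := intCRT n.primeFactors hPP
      (fun p => if hp : p ∈ n.primeFactors then ((wf p hp).val : ℤ) else 0)
    have hWp : ∀ p, ∀ hp : p ∈ n.primeFactors, ((W : ZMod p)) = wf p hp := by
      intro p hp
      haveI : NeZero p := ⟨(hPP p hp).pos.ne'⟩
      have hd := hW p hp
      rw [dif_pos hp] at hd
      have hzero : ((W - ((wf p hp).val : ℤ) : ℤ) : ZMod p) = 0 := by
        rw [ZMod.intCast_zmod_eq_zero_iff_dvd]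
        exact hd
      rw [Int.cast_sub, sub_eq_zero] at hzero
      rw [hzero]
      push_cast
      rw [ZMod.natCast_val, ZMod.cast_id]
    have hunit : IsUnit ((W : ZMod n)) := by
      apply isUnit_of_res hn0
      intro p hpp' hpdvd
      have hpmem : p ∈ n.primeFactors := Nat.mem_primeFactors.mpr ⟨hpp', hpdvd, hn0⟩
      rw [show ZMod.castHom hpdvd (ZMod p) ((W : ZMod n)) = ((W : ZMod p)) from
        map_intCast _ W]
      rw [hWp p hpmem]
      exact hw0 p hpmem
    refine ⟨((W : ZMod n)) ^ 3, ⟨hunit.unit, by rw [IsUnit.unit_spec]⟩, ?_⟩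
    intro p hp
    rw [map_pow, show ZMod.castHom (hpn p hp) (ZMod p) ((W : ZMod n)) = ((W : ZMod p)) from
      map_intCast _ W, hWp p hp, hw3 p hp]
  choose Af hAu hAres using hglob
  refine ⟨J, hJne, fun i => if hi : i ∈ J then Af i hi else 1, ?_, ?_⟩
  · intro i hi
    show (if hi : i ∈ J then Af i hi else 1) ∈ Tset n
    rw [dif_pos hi]
    exact hAu i hi
  · apply eq_zero_of_res hn0 hsf
    intro p hpp' hpdvd
    have hpmem : p ∈ n.primeFactors := Nat.mem_primeFactors.mpr ⟨hpp', hpdvd, hn0⟩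
    rw [map_sum]
    have hterm : ∀ i ∈ J,
        ZMod.castHom hpdvd (ZMod p) ((if hi : i ∈ J then Af i hi else 1) * S i)
        = ap p hpmem i * ZMod.castHom (hpn p hpmem) (ZMod p) (S i) := by
      intro i hi
      rw [dif_pos hi, map_mul]
      congr 1
      exact hAres i hi p hpmem
    exact (Finset.sum_congr rfl hterm).trans (hapsum p hpmem)
end
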